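/- arXiv:2411.10394 — 3 statements merged into one kernel-verified Lean document; each statement's English description precedes it below -/
import Mathlib

section
/- Let C ∈ T^{n×n} be supported on a DAG G on [n]. Then the tropical polyhedron tconv(C*) is contained in tconv(C) and coincides with the closed covector cell of the perfect matching (1,2,…,n) of the support graph of C; explicitly, tconv(C*) = {x ∈ ℝ^n/ℝ𝟙 : x_j − c_jj ≥ x_i − c_ij for all i, j with c_ij < ∞} = {x ∈ ℝ^n/ℝ𝟙 : x_i − x_j ≤ c_ij for all i ≠ j with c_ij < ∞} = Q(C). -/
open scoped Classical
noncomputable section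

/-- The min-plus tropical semiring `T = ℝ ∪ {∞}` with `⊕ = min` and `⊙ = +`. -/
abbrev Trop : Type := WithTop ℝ

/-- Min-plus identity matrix: `0` on the diagonal, `∞` off the diagonal. -/
def mpId {n : ℕ} : Matrix (Fin n) (Fin n) Trop := fun i j => if i = j then 0 else ⊤

/-- Min-plus matrix product. -/
def mpMul {n : ℕ} (A B : Matrix (Fin n) (Fin n) Trop) : Matrix (Fin n) (Fin n) Trop :=
  fun i j => Finset.univ.inf fun k => A i k + B k j

/-- Entrywise minimum (tropical sum) of matrices. -/
def mpAdd {n : ℕ} (A B : Matrix (Fin n) (Fin n) Trop) : Matrix (Fin n) (Fin n) Trop :=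
  fun i j => A i j ⊓ B i j

/-- Min-plus matrix power. -/
def mpPow {n : ℕ} (A : Matrix (Fin n) (Fin n) Trop) : ℕ → Matrix (Fin n) (Fin n) Trop
  | 0 => mpId
  | k + 1 => mpMul (mpPow A k) A

/-- Kleene star `A* = I ⊕ A ⊕ A^{⊙2} ⊕ ⋯ ⊕ A^{⊙(n−1)}`. -/
def kleene {n : ℕ} (A : Matrix (Fin n) (Fin n) Trop) : Matrix (Fin n) (Fin n) Trop :=
  fun i j => (Finset.range n).inf fun k => mpPow A k i j

/-- `p` is a directed path from `j` to `i` in the digraph with edge relation `E`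
(`E a b` meaning there is an edge `a → b`), recorded as its list of vertices. -/
def IsPathFrom {n : ℕ} (E : Fin n → Fin n → Prop) (j i : Fin n) (p : List (Fin n)) : Prop :=
  p.head? = some j ∧ p.getLast? = some i ∧ p.Chain' E

/-- A digraph is acyclic if the only paths from a vertex to itself are trivial. -/
def IsDAG {n : ℕ} (E : Fin n → Fin n → Prop) : Prop :=
  ∀ (j : Fin n) (p : List (Fin n)), IsPathFrom E j j p → p.length ≤ 1

/-- `C ∈ T^{n×n}` is supported on the digraph `E` : zero diagonal, and for `i ≠ j`
the entry `c_ij` is finite exactly when `j → i` is an edge. -/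
def SupportedOn {n : ℕ} (C : Matrix (Fin n) (Fin n) Trop) (E : Fin n → Fin n → Prop) : Prop :=
  (∀ i, C i i = 0) ∧ ∀ i j, i ≠ j → (C i j ≠ ⊤ ↔ E j i)

/-- The edge weight function of a weight matrix: `cw C a b = c_{ba}` is the weight of
the edge `a → b`. -/
def cw {n : ℕ} (C : Matrix (Fin n) (Fin n) Trop) : Fin n → Fin n → ℝ :=
  fun a b => WithTop.untopD 0 (C b a)

/-- Total weight of a path (sum of the weights of its consecutive edges). -/
def pathWeight {n : ℕ} (w : Fin n → Fin n → ℝ) (p : List (Fin n)) : ℝ :=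
  ((p.zip p.tail).map fun q => w q.1 q.2).sum

/-- The edge `j → i` belongs to the weighted transitive reduction `G^♭_w`:
the single edge is the unique minimum-weight directed path from `j` to `i`. -/
def InWTR {n : ℕ} (E : Fin n → Fin n → Prop) (w : Fin n → Fin n → ℝ) (j i : Fin n) : Prop :=
  E j i ∧ ∀ p : List (Fin n), IsPathFrom E j i p → p ≠ [j, i] → w j i < pathWeight w p

/-- Weighted digraph polyhedron `Q(C) = {x : x_i − x_j ≤ c_ij}` (as the saturated
subset of `ℝ^n` representing a subset of `ℝ^n/ℝ𝟙`). -/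
def wdp {n : ℕ} (C : Matrix (Fin n) (Fin n) Trop) : Set (Fin n → ℝ) :=
  {x | ∀ i j, i ≠ j → ((x i - x j : ℝ) : Trop) ≤ C i j}

/-- The tropical polyhedron generated by the columns of `V`: all min-plus linear
combinations `V ⊙ λ`, `λ ∈ ℝ^n` (as a saturated subset of `ℝ^d`). -/
def tconvM {d n : ℕ} (V : Matrix (Fin d) (Fin n) Trop) : Set (Fin d → ℝ) :=
  {x | ∃ lam : Fin n → ℝ, ∀ i, (x i : Trop) = Finset.univ.inf fun j => V i j + (lam j : Trop)}

/-- `v` is reachable from `s`. -/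
def Reaches {n : ℕ} (E : Fin n → Fin n → Prop) (s v : Fin n) : Prop :=
  ∃ p, IsPathFrom E s v p

/-- Edges of the transitive closure `G*`: `j → i` with `i ≠ j` reachable from `j`. -/
def EStar {n : ℕ} (E : Fin n → Fin n → Prop) (j i : Fin n) : Prop :=
  j ≠ i ∧ ∃ p, IsPathFrom E j i p

section Aux
variable {n : ℕ}

lemma trop_inf_add {ι : Type*} (s : Finset ι) (f : ι → Trop) (c : Trop) :
    s.inf f + c = s.inf fun l => f l + c := by
  rcases s.eq_empty_or_nonempty with h | h
  · simp [h]
  · refine le_antisymm (Finset.le_inf fun l hl => add_le_add_left (Finset.inf_le hl) c) ?_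
    obtain ⟨l, hl, hfl⟩ := Finset.exists_mem_eq_inf s h f
    rw [hfl]
    exact Finset.inf_le hl

lemma trop_add_inf {ι : Type*} (s : Finset ι) (f : ι → Trop) (c : Trop) :
    c + s.inf f = s.inf fun l => c + f l := by
  rw [add_comm, trop_inf_add]
  simp [add_comm]

def wsum (C : Matrix (Fin n) (Fin n) Trop) (v : ℕ → Fin n) (m : ℕ) : Trop :=
  ∑ t ∈ Finset.range m, C (v (t + 1)) (v t)

variable {C : Matrix (Fin n) (Fin n) Trop}

lemma pow_le_wsum : ∀ (m : ℕ) (v : ℕ → Fin n), mpPow C m (v m) (v 0) ≤ wsum C v m := by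
  intro m
  induction m with
  | zero => intro v; simp [mpPow, mpId, wsum]
  | succ m ih =>
    intro v
    have h1 : mpPow C (m + 1) (v (m + 1)) (v 0)
        ≤ mpPow C m (v (m + 1)) (v 1) + C (v 1) (v 0) :=
      Finset.inf_le (Finset.mem_univ (v 1))
    have h2 := ih (fun t => v (t + 1))
    calc mpPow C (m + 1) (v (m + 1)) (v 0)
        ≤ mpPow C m (v (m + 1)) (v 1) + C (v 1) (v 0) := h1
      _ ≤ wsum C (fun t => v (t + 1)) m + C (v 1) (v 0) := add_le_add_left h2 _
      _ = wsum C v (m + 1) := by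
          unfold wsum
          rw [Finset.sum_range_succ' (fun t => C (v (t + 1)) (v t)) m]

lemma exists_good_walk (hdiag : ∀ i, C i i = 0) :
    ∀ (m : ℕ) (i j : Fin n), mpPow C m i j ≠ ⊤ →
      ∃ m' ≤ m, ∃ v : ℕ → Fin n, v 0 = j ∧ v m' = i ∧ (∀ t < m', v (t + 1) ≠ v t) ∧
        wsum C v m' ≤ mpPow C m i j := by
  intro m
  induction m with
  | zero =>
    intro i j h
    have hij : i = j := by
      by_contra hne
      exact h (if_neg hne)
    refine ⟨0, le_refl _, fun _ => j, rfl, hij ▸ rfl, by simp, ?_⟩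
    simp [wsum, mpPow, mpId, hij]
  | succ m ih =>
    intro i j h
    obtain ⟨l, _, hl⟩ := Finset.exists_mem_eq_inf Finset.univ
      ⟨j, Finset.mem_univ j⟩ (fun l => mpPow C m i l + C l j)
    have heq : mpPow C (m + 1) i j = mpPow C m i l + C l j := hl
    have h1 : mpPow C m i l ≠ ⊤ := by
      intro ht; rw [heq, ht, top_add] at h; exact h rfl
    obtain ⟨m', hm', v, hv0, hvm, hnd, hws⟩ := ih i l h1
    by_cases hlj : l = j
    · subst hlj
      exact ⟨m', le_trans hm' (Nat.le_succ m), v, hv0, hvm, hnd, by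
        rw [heq, hdiag l, add_zero]; exact hws⟩
    · refine ⟨m' + 1, Nat.succ_le_succ hm', fun t => match t with | 0 => j | s + 1 => v s,
        rfl, hvm, ?_, ?_⟩
      · intro t ht
        match t with
        | 0 => show v 0 ≠ j; rw [hv0]; exact hlj
        | s + 1 => exact hnd s (Nat.lt_of_succ_lt_succ ht)
      · show wsum C _ (m' + 1) ≤ _
        rw [heq]
        have : wsum C (fun t => match t with | 0 => j | s + 1 => v s) (m' + 1)
            = wsum C v m' + C (v 0) j := by
          unfold wsum
          rw [Finset.sum_range_succ' (fun t => _) m']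
        rw [this, hv0]
        exact add_le_add_left hws _

end Aux

section Aux2
variable {n : ℕ} {E : Fin n → Fin n → Prop} {C : Matrix (Fin n) (Fin n) Trop}

lemma no_edge_cycle (hdag : IsDAG E) (v : ℕ → Fin n) (len : ℕ) (h1 : 1 ≤ len)
    (hE : ∀ t < len, E (v t) (v (t + 1))) (hcl : v len = v 0) : False := by
  set p : List (Fin n) := (List.range (len + 1)).map v with hp
  have hhead : p.head? = some (v 0) := by
    rw [hp, List.range_succ_eq_map]
    rfl
  have hlast : p.getLast? = some (v len) := by
    rw [hp, List.range_succ, List.map_append]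
    exact List.getLast?_concat
  have hchain : p.Chain' E := by
    rw [hp]
    exact (List.isChain_map v).2 <| (List.isChain_range_succ (fun a b => E (v a) (v b)) len).2 hE
  have hpath : IsPathFrom E (v 0) (v 0) p := ⟨hhead, hcl ▸ hlast, hchain⟩
  have := hdag (v 0) p hpath
  rw [hp, List.length_map, List.length_range] at this
  omega

lemma steps_are_edges (hsupp : ∀ i j : Fin n, i ≠ j → (C i j ≠ ⊤ ↔ E j i))
    {v : ℕ → Fin n} {m' : ℕ} (hnd : ∀ t < m', v (t + 1) ≠ v t)
    (hfin : wsum C v m' ≠ ⊤) : ∀ t < m', E (v t) (v (t + 1)) := by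
  intro t ht
  have hterm : C (v (t + 1)) (v t) ≠ ⊤ := by
    intro htop
    exact hfin (WithTop.sum_eq_top.2 ⟨t, Finset.mem_range.2 ht, htop⟩)
  exact (hsupp (v (t + 1)) (v t) (hnd t ht)).1 hterm

lemma pow_diag_nonneg (hdag : IsDAG E) (hdiag : ∀ i, C i i = 0)
    (hsupp : ∀ i j : Fin n, i ≠ j → (C i j ≠ ⊤ ↔ E j i)) (m : ℕ) (i : Fin n) :
    (0 : Trop) ≤ mpPow C m i i := by
  by_cases h : mpPow C m i i = ⊤
  · exact h ▸ le_top
  obtain ⟨m', _, v, hv0, hvm, hnd, hws⟩ := exists_good_walk hdiag m i i h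
  rcases Nat.eq_zero_or_pos m' with hm0 | hm1
  · subst hm0
    simpa [wsum] using hws
  · exfalso
    have hfin : wsum C v m' ≠ ⊤ := fun ht => h (top_le_iff.1 (ht ▸ hws))
    exact no_edge_cycle hdag v m' hm1 (steps_are_edges hsupp hnd hfin) (hvm.trans hv0.symm)

lemma kleene_diag (hdag : IsDAG E) (hdiag : ∀ i, C i i = 0)
    (hsupp : ∀ i j : Fin n, i ≠ j → (C i j ≠ ⊤ ↔ E j i)) (i : Fin n) :
    kleene C i i = 0 := by
  refine le_antisymm ?_ (Finset.le_inf fun m _ => pow_diag_nonneg hdag hdiag hsupp m i)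
  have h0 : 0 ∈ Finset.range n := Finset.mem_range.2 i.pos
  calc kleene C i i ≤ mpPow C 0 i i := Finset.inf_le h0
    _ = 0 := if_pos rfl

lemma pow_succ_le (hdiag : ∀ i, C i i = 0) (m : ℕ) (i j : Fin n) :
    mpPow C (m + 1) i j ≤ mpPow C m i j := by
  calc mpPow C (m + 1) i j ≤ mpPow C m i j + C j j := Finset.inf_le (Finset.mem_univ j)
    _ = mpPow C m i j := by rw [hdiag j, add_zero]

lemma pow_anti (hdiag : ∀ i, C i i = 0) {a b : ℕ} (hab : a ≤ b) (i j : Fin n) :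
    mpPow C b i j ≤ mpPow C a i j := by
  induction b with
  | zero => exact Nat.le_zero.1 hab ▸ le_refl _
  | succ b ih =>
    rcases Nat.lt_or_ge a (b + 1) with h | h
    · exact le_trans (pow_succ_le hdiag b i j) (ih (Nat.lt_succ_iff.1 h))
    · have : a = b + 1 := le_antisymm hab h
      exact this ▸ le_refl _

lemma kleene_le_pow_card (hdag : IsDAG E) (hdiag : ∀ i, C i i = 0)
    (hsupp : ∀ i j : Fin n, i ≠ j → (C i j ≠ ⊤ ↔ E j i)) (i k : Fin n) :
    kleene C i k ≤ mpPow C n i k := by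
  by_cases h : mpPow C n i k = ⊤
  · exact h ▸ le_top
  obtain ⟨m', hm', v, hv0, hvm, hnd, hws⟩ := exists_good_walk hdiag n i k h
  have hfin : wsum C v m' ≠ ⊤ := fun ht => h (top_le_iff.1 (ht ▸ hws))
  have hedges := steps_are_edges hsupp hnd hfin
  rcases Nat.lt_or_ge m' n with hlt | hge
  · calc kleene C i k ≤ mpPow C m' i k := Finset.inf_le (Finset.mem_range.2 hlt)
      _ = mpPow C m' (v m') (v 0) := by rw [hvm, hv0]
      _ ≤ wsum C v m' := pow_le_wsum m' v
      _ ≤ mpPow C n i k := hws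
  · exfalso
    have hm'n : m' = n := le_antisymm hm' hge
    subst hm'n
    obtain ⟨a, b, hab, hvab⟩ := Fintype.exists_ne_map_eq_of_card_lt
      (fun t : Fin (m' + 1) => v t) (by simp)
    have habne : (a : ℕ) ≠ (b : ℕ) := fun hh => hab (Fin.val_injective hh)
    wlog hlt : (a : ℕ) < (b : ℕ) generalizing a b
    · exact this b a hab.symm hvab.symm habne.symm (by omega)
    refine no_edge_cycle hdag (fun t => v (a + t)) (b - a) (by omega) ?_ ?_
    · intro t ht
      have h1 : (a : ℕ) + t < m' := by omega
      have h2 : (a : ℕ) + t + 1 = (a : ℕ) + (t + 1) := by omega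
      have := hedges _ h1
      show E (v ((a:ℕ) + t)) (v ((a:ℕ) + (t + 1)))
      rwa [← h2]
    · show v ((a : ℕ) + ((b : ℕ) - a)) = v ((a : ℕ) + 0)
      have : (a : ℕ) + ((b : ℕ) - a) = b := by omega
      rw [this, add_zero, hvab]

lemma kleene_triangle (hdag : IsDAG E) (hdiag : ∀ i, C i i = 0)
    (hsupp : ∀ i j : Fin n, i ≠ j → (C i j ≠ ⊤ ↔ E j i)) (i j k : Fin n) :
    kleene C i k ≤ C i j + kleene C j k := by
  show kleene C i k ≤ C i j + (Finset.range n).inf fun m => mpPow C m j k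
  rw [trop_add_inf]
  refine Finset.le_inf fun m hm => ?_
  have hmn : m < n := Finset.mem_range.1 hm
  -- reduce to: mpPow C (m+1) i k ≤ C i j + mpPow C m j k
  have hstep : mpPow C (m + 1) i k ≤ C i j + mpPow C m j k := by
    by_cases h : mpPow C m j k = ⊤
    · rw [h, add_top]; exact le_top
    obtain ⟨m', hm', v, hv0, hvm, hnd, hws⟩ := exists_good_walk hdiag m j k h
    set v' : ℕ → Fin n := fun t => if t ≤ m' then v t else i with hv'
    have hsum : wsum C v' (m' + 1) = wsum C v m' + C i j := by
      unfold wsum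
      rw [Finset.sum_range_succ]
      congr 1
      · exact Finset.sum_congr rfl fun t ht => by
          have ht' := Finset.mem_range.1 ht
          simp only [hv', if_pos (by omega : t + 1 ≤ m'), if_pos (by omega : t ≤ m')]
      · simp only [hv', if_pos (le_refl m'), if_neg (by omega : ¬ m' + 1 ≤ m'), hvm]
    have h1 : mpPow C (m' + 1) i k ≤ wsum C v' (m' + 1) := by
      have := pow_le_wsum (C := C) (m' + 1) v'
      have hv'0 : v' 0 = k := by simp only [hv', if_pos (Nat.zero_le m'), hv0]
      have hv'm : v' (m' + 1) = i := by simp only [hv', if_neg (by omega : ¬ m' + 1 ≤ m')]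
      rwa [hv'0, hv'm] at this
    calc mpPow C (m + 1) i k ≤ mpPow C (m' + 1) i k :=
          pow_anti hdiag (Nat.succ_le_succ hm') i k
      _ ≤ wsum C v' (m' + 1) := h1
      _ = wsum C v m' + C i j := hsum
      _ ≤ mpPow C m j k + C i j := add_le_add_left hws _
      _ = C i j + mpPow C m j k := add_comm _ _
  calc kleene C i k ≤ mpPow C n i k := kleene_le_pow_card hdag hdiag hsupp i k
    _ ≤ mpPow C (m + 1) i k := pow_anti hdiag hmn i k
    _ ≤ C i j + mpPow C m j k := hstep

end Aux2

section Aux3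
variable {n : ℕ} {E : Fin n → Fin n → Prop} {C : Matrix (Fin n) (Fin n) Trop}

lemma wdp_step (hdiag : ∀ i, C i i = 0) {x : Fin n → ℝ} (hx : x ∈ wdp C) (l j : Fin n) :
    (x l : Trop) ≤ C l j + (x j : Trop) := by
  by_cases hlj : l = j
  · subst hlj; rw [hdiag l, zero_add]
  by_cases hC : C l j = ⊤
  · rw [hC, top_add]; exact le_top
  obtain ⟨r, hr⟩ := WithTop.ne_top_iff_exists.1 hC
  have h1 : ((x l - x j : ℝ) : Trop) ≤ (r : Trop) := hr ▸ hx l j hlj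
  have h2 : x l - x j ≤ r := WithTop.coe_le_coe.1 h1
  rw [← hr, ← WithTop.coe_add, WithTop.coe_le_coe]
  linarith

lemma wdp_pow_ineq (hdiag : ∀ i, C i i = 0) {x : Fin n → ℝ} (hx : x ∈ wdp C) :
    ∀ (m : ℕ) (i j : Fin n), (x i : Trop) ≤ mpPow C m i j + (x j : Trop) := by
  intro m
  induction m with
  | zero =>
    intro i j
    by_cases hij : i = j
    · subst hij; show (x i : Trop) ≤ mpId i i + _; rw [mpId, if_pos rfl, zero_add]
    · show (x i : Trop) ≤ mpId i j + _
      rw [mpId, if_neg hij, top_add]; exact le_top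
  | succ m ih =>
    intro i j
    show (x i : Trop) ≤ mpMul (mpPow C m) C i j + (x j : Trop)
    rw [mpMul, trop_inf_add]
    refine Finset.le_inf fun l _ => ?_
    calc (x i : Trop) ≤ mpPow C m i l + (x l : Trop) := ih i l
      _ ≤ mpPow C m i l + (C l j + (x j : Trop)) :=
          add_le_add_right (wdp_step hdiag hx l j) _
      _ = mpPow C m i l + C l j + (x j : Trop) := (add_assoc _ _ _).symm

lemma wdp_subset_tconv_kleene (hdag : IsDAG E) (hdiag : ∀ i, C i i = 0)
    (hsupp : ∀ i j : Fin n, i ≠ j → (C i j ≠ ⊤ ↔ E j i)) :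
    wdp C ⊆ tconvM (kleene C) := by
  intro x hx
  refine ⟨x, fun i => le_antisymm ?_ ?_⟩
  · refine Finset.le_inf fun j _ => ?_
    show (x i : Trop) ≤ (Finset.range n).inf (fun m => mpPow C m i j) + _
    rw [trop_inf_add]
    exact Finset.le_inf fun m _ => wdp_pow_ineq hdiag hx m i j
  · calc Finset.univ.inf (fun j => kleene C i j + (x j : Trop))
        ≤ kleene C i i + (x i : Trop) := Finset.inf_le (Finset.mem_univ i)
      _ = (x i : Trop) := by rw [kleene_diag hdag hdiag hsupp i, zero_add]

lemma wdp_subset_tconv (hdiag : ∀ i, C i i = 0) : wdp C ⊆ tconvM C := by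
  intro x hx
  refine ⟨x, fun i => le_antisymm ?_ ?_⟩
  · exact Finset.le_inf fun j _ => wdp_step hdiag hx i j
  · calc Finset.univ.inf (fun j => C i j + (x j : Trop))
        ≤ C i i + (x i : Trop) := Finset.inf_le (Finset.mem_univ i)
      _ = (x i : Trop) := by rw [hdiag i, zero_add]

lemma tconv_kleene_subset_wdp (hdag : IsDAG E) (hdiag : ∀ i, C i i = 0)
    (hsupp : ∀ i j : Fin n, i ≠ j → (C i j ≠ ⊤ ↔ E j i)) :
    tconvM (kleene C) ⊆ wdp C := by
  rintro x ⟨lam, hlam⟩ i j hij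
  by_cases hC : C i j = ⊤
  · rw [hC]; exact le_top
  obtain ⟨k, _, hk⟩ := Finset.exists_mem_eq_inf Finset.univ
    ⟨i, Finset.mem_univ i⟩ (fun k => kleene C j k + (lam k : Trop))
  have hxj : (x j : Trop) = kleene C j k + (lam k : Trop) := (hlam j).trans hk
  have hxi : (x i : Trop) ≤ kleene C i k + (lam k : Trop) :=
    (hlam i).le.trans (Finset.inf_le (Finset.mem_univ k))
  have h1 : (x i : Trop) ≤ C i j + (x j : Trop) := by
    rw [hxj, ← add_assoc]
    exact hxi.trans (add_le_add_left (kleene_triangle hdag hdiag hsupp i j k) _)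
  obtain ⟨r, hr⟩ := WithTop.ne_top_iff_exists.1 hC
  rw [← hr] at h1 ⊢
  rw [← WithTop.coe_add, WithTop.coe_le_coe] at h1
  rw [WithTop.coe_le_coe]
  linarith

end Aux3

/-- For `C` supported on a DAG, `tconv(C*) ⊆ tconv(C)` and `tconv(C*)`
coincides with the closed covector cell of the perfect matching `(1,…,n)`, explicitly
`{x : x_j − c_jj ≥ x_i − c_ij whenever c_ij < ∞} = {x : x_i − x_j ≤ c_ij, i ≠ j, c_ij < ∞}
 = Q(C)`. -/
theorem stmt0 {n : ℕ} (E : Fin n → Fin n → Prop) (C : Matrix (Fin n) (Fin n) Trop)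
    (hdag : IsDAG E) (hsupp : SupportedOn C E) :
    tconvM (kleene C) ⊆ tconvM C ∧
    tconvM (kleene C) =
      {x : Fin n → ℝ | ∀ i j : Fin n, C i j ≠ ⊤ →
        x i - WithTop.untopD 0 (C i j) ≤ x j - WithTop.untopD 0 (C j j)} ∧
    {x : Fin n → ℝ | ∀ i j : Fin n, C i j ≠ ⊤ →
        x i - WithTop.untopD 0 (C i j) ≤ x j - WithTop.untopD 0 (C j j)} = wdp C := by
  obtain ⟨hdiag, hoff⟩ := hsupp
  have hS : {x : Fin n → ℝ | ∀ i j : Fin n, C i j ≠ ⊤ →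
      x i - WithTop.untopD 0 (C i j) ≤ x j - WithTop.untopD 0 (C j j)} = wdp C := by
    ext x
    constructor
    · intro h i j hij
      by_cases hC : C i j = ⊤
      · rw [hC]; exact le_top
      obtain ⟨r, hr⟩ := WithTop.ne_top_iff_exists.1 hC
      have h1 := h i j hC
      rw [hdiag j, ← hr] at h1
      simp only [WithTop.untopD_coe] at h1
      have h0 : WithTop.untopD 0 (0 : Trop) = (0 : ℝ) := rfl
      rw [h0] at h1
      rw [← hr, WithTop.coe_le_coe]
      linarith
    · intro h i j hC
      rw [hdiag j]
      have h0 : WithTop.untopD 0 (0 : Trop) = (0 : ℝ) := rfl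
      rw [h0]
      by_cases hij : i = j
      · subst hij
        rw [hdiag i, h0]
      · obtain ⟨r, hr⟩ := WithTop.ne_top_iff_exists.1 hC
        have h1 := h i j hij
        rw [← hr, WithTop.coe_le_coe] at h1
        rw [← hr]
        simp only [WithTop.untopD_coe]
        linarith
  have heq : tconvM (kleene C) = wdp C :=
    Set.Subset.antisymm (tconv_kleene_subset_wdp hdag hdiag hoff)
      (wdp_subset_tconv_kleene hdag hdiag hoff)
  refine ⟨?_, heq.trans hS.symm, hS⟩
  rw [heq]
  exact wdp_subset_tconv hdiag
end
end

section
/- A tropical polytope P ⊆ ℝ^n/ℝ𝟙 is a polytrope (i.e., P is also convex in the ordinary sense under the identification ℝ^n/ℝ𝟙 ≅ ℝ^{n−1}) if and only if P = tconv(C*) = Q(C) for some matrix C ∈ T^{n×n} whose associated weighted digraph has no negative-weight directed cycles (so that the Kleene star C* converges). -/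
open scoped Classical
noncomputable section

/-- `V` is doubly ℝ-astic: every row and every column has a finite entry. -/
def DoublyRAstic {d n : ℕ} (V : Matrix (Fin d) (Fin n) Trop) : Prop :=
  (∀ i, ∃ j, V i j ≠ ⊤) ∧ (∀ j, ∃ i, V i j ≠ ⊤)

/-- The weighted digraph of `C` has no negative-weight directed cycle. -/
def NoNegCycle {n : ℕ} (C : Matrix (Fin n) (Fin n) Trop) : Prop :=
  ∀ (j : Fin n) (p : List (Fin n)),
    IsPathFrom (fun a b => C b a ≠ ⊤) j j p → 0 ≤ pathWeight (cw C) p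

set_option linter.unusedVariables false

namespace S2

abbrev tval (a : Trop) : ℝ := WithTop.untopD 0 a

lemma coe_tval {a : Trop} (h : a ≠ ⊤) : ((tval a : ℝ) : Trop) = a := by
  cases a with
  | none => exact absurd rfl h
  | some r => rfl

@[simp] lemma tval_coe (r : ℝ) : tval ((r : ℝ) : Trop) = r := rfl

variable {n m : ℕ} {V : Matrix (Fin n) (Fin m) Trop}

/-- covering criterion predicate -/
def covers (V : Matrix (Fin n) (Fin m) Trop) (z : Fin n → ℝ) : Prop :=
  ∀ i, ∃ j, V i j ≠ ⊤ ∧ ∀ k, V k j ≠ ⊤ → z k - tval (V k j) ≤ z i - tval (V i j)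

lemma mem_iff_covers (hV : DoublyRAstic V) (z : Fin n → ℝ) :
    z ∈ tconvM V ↔ covers V z := by
  constructor
  · rintro ⟨lam, h⟩ i
    have hne : (Finset.univ : Finset (Fin m)).Nonempty := by
      obtain ⟨j, -⟩ := hV.1 i; exact ⟨j, Finset.mem_univ j⟩
    obtain ⟨j, -, hj⟩ := Finset.exists_mem_eq_inf Finset.univ hne
      (fun j => V i j + ((lam j : ℝ) : Trop))
    have hzi : ((z i : ℝ) : Trop) = V i j + (lam j : Trop) := by rw [h i, hj]
    have hVij : V i j ≠ ⊤ := by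
      intro ht
      rw [ht, top_add] at hzi
      exact (WithTop.coe_ne_top hzi)
    refine ⟨j, hVij, ?_⟩
    have hval : z i = tval (V i j) + lam j := by
      have : ((z i : ℝ) : Trop) = ((tval (V i j) + lam j : ℝ) : Trop) := by
        rw [WithTop.coe_add, coe_tval hVij] at *
        exact hzi
      exact_mod_cast this
    intro k hVkj
    have hk : ((z k : ℝ) : Trop) ≤ V k j + (lam j : Trop) := by
      rw [h k]
      exact Finset.inf_le (Finset.mem_univ j)
    rw [← coe_tval hVkj, ← WithTop.coe_add, WithTop.coe_le_coe] at hk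
    have := hk
    linarith [hval, this]
  · intro hc
    classical
    set Tj : Fin m → Finset (Fin n) := fun j => Finset.univ.filter (fun k => V k j ≠ ⊤) with hTj
    have hTne : ∀ j, (Tj j).Nonempty := by
      intro j
      obtain ⟨k, hk⟩ := hV.2 j
      exact ⟨k, by simp [hTj, hk]⟩
    set lam : Fin m → ℝ := fun j => (Tj j).sup' (hTne j) (fun k => z k - tval (V k j)) with hlam
    refine ⟨lam, fun i => le_antisymm ?_ ?_⟩
    · -- z i ≤ inf
      refine Finset.le_inf (fun j _ => ?_)
      by_cases hVij : V i j = ⊤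
      · rw [hVij, top_add]; exact le_top
      · have hi : i ∈ Tj j := by simp [hTj, hVij]
        have h1 : z i - tval (V i j) ≤ lam j :=
          Finset.le_sup' (fun k => z k - tval (V k j)) hi
        rw [← coe_tval hVij, ← WithTop.coe_add, WithTop.coe_le_coe]
        linarith
    · -- inf ≤ z i : use the covering column
      obtain ⟨j, hVij, hcov⟩ := hc i
      have hlamj : lam j = z i - tval (V i j) := by
        apply le_antisymm
        · exact Finset.sup'_le _ _ (fun k hk => hcov k ((Finset.mem_filter.mp hk).2))
        · exact Finset.le_sup' (fun k => z k - tval (V k j)) (Finset.mem_filter.mpr ⟨Finset.mem_univ i, hVij⟩)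
      have : V i j + ((lam j : ℝ) : Trop) = ((z i : ℝ) : Trop) := by
        rw [← coe_tval hVij, ← WithTop.coe_add, WithTop.coe_inj, hlamj]
        ring
      calc (Finset.univ.inf fun j => V i j + ((lam j : ℝ) : Trop)) ≤ _ :=
            Finset.inf_le (Finset.mem_univ j)
        _ = _ := this


/-- the point `V ⊙ lam` -/
def vpt (V : Matrix (Fin n) (Fin m) Trop) (lam : Fin m → ℝ) : Fin n → ℝ :=
  fun i => tval (Finset.univ.inf fun j => V i j + ((lam j : ℝ) : Trop))

lemma row_inf_ne_top (hV : DoublyRAstic V) (lam : Fin m → ℝ) (i : Fin n) :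
    (Finset.univ.inf fun j => V i j + ((lam j : ℝ) : Trop)) ≠ ⊤ := by
  obtain ⟨j, hj⟩ := hV.1 i
  intro ht
  have h1 : (Finset.univ.inf fun j => V i j + ((lam j : ℝ) : Trop)) ≤ V i j + (lam j : Trop) :=
    Finset.inf_le (Finset.mem_univ j)
  rw [ht, top_le_iff, ← coe_tval hj, ← WithTop.coe_add] at h1
  exact WithTop.coe_ne_top h1

lemma coe_vpt (hV : DoublyRAstic V) (lam : Fin m → ℝ) (i : Fin n) :
    ((vpt V lam i : ℝ) : Trop) = Finset.univ.inf fun j => V i j + ((lam j : ℝ) : Trop) :=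
  coe_tval (row_inf_ne_top hV lam i)

lemma vpt_mem (hV : DoublyRAstic V) (lam : Fin m → ℝ) : vpt V lam ∈ tconvM V :=
  ⟨lam, coe_vpt hV lam⟩

lemma tconvM_nonempty (hV : DoublyRAstic V) : (tconvM V).Nonempty :=
  ⟨vpt V (fun _ => 0), vpt_mem hV _⟩

/-- columns with finite entry in row l -/
def SS (V : Matrix (Fin n) (Fin m) Trop) (l : Fin n) : Finset (Fin m) :=
  Finset.univ.filter (fun j => V l j ≠ ⊤)

lemma SS_nonempty (hV : DoublyRAstic V) (l : Fin n) : (SS V l).Nonempty := by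
  obtain ⟨j, hj⟩ := hV.1 l
  exact ⟨j, Finset.mem_filter.mpr ⟨Finset.mem_univ j, hj⟩⟩

/-- the canonical polytrope matrix of V -/
def CC (V : Matrix (Fin n) (Fin m) Trop) : Matrix (Fin n) (Fin n) Trop :=
  fun i k => if h : (SS V k).Nonempty then
    (SS V k).sup' h (fun j => V i j + (((-(tval (V k j))) : ℝ) : Trop)) else 0

lemma CC_eq (hV : DoublyRAstic V) (i k : Fin n) :
    CC V i k = (SS V k).sup' (SS_nonempty hV k)
      (fun j => V i j + (((-(tval (V k j))) : ℝ) : Trop)) := by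
  rw [CC, dif_pos (SS_nonempty hV k)]

lemma CC_diag (hV : DoublyRAstic V) (i : Fin n) : CC V i i = 0 := by
  rw [CC_eq hV]
  apply le_antisymm
  · apply Finset.sup'_le
    intro j hj
    have hj' : V i j ≠ ⊤ := (Finset.mem_filter.mp hj).2
    refine le_of_eq ?_
    rw [← coe_tval hj', ← WithTop.coe_add]
    norm_num
  · obtain ⟨j, hj⟩ := SS_nonempty hV i
    have hj' : V i j ≠ ⊤ := (Finset.mem_filter.mp hj).2
    calc (0 : Trop) = V i j + (((-(tval (V i j))) : ℝ) : Trop) := by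
          rw [← coe_tval hj', ← WithTop.coe_add]
          norm_num
      _ ≤ _ := Finset.le_sup' (fun j => V i j + (((-(tval (V i j))) : ℝ) : Trop)) hj

/-- every point of the polytope satisfies all difference constraints of CC -/
lemma mem_le_CC (hV : DoublyRAstic V) {x : Fin n → ℝ} (hx : x ∈ tconvM V) (a b : Fin n) :
    ((x a - x b : ℝ) : Trop) ≤ CC V a b := by
  obtain ⟨lam, h⟩ := hx
  have hne : (Finset.univ : Finset (Fin m)).Nonempty := by
    obtain ⟨j, -⟩ := hV.1 b; exact ⟨j, Finset.mem_univ j⟩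
  obtain ⟨j, -, hj⟩ := Finset.exists_mem_eq_inf Finset.univ hne
    (fun j => V b j + ((lam j : ℝ) : Trop))
  have hxb : ((x b : ℝ) : Trop) = V b j + (lam j : Trop) := by rw [h b, hj]
  have hVbj : V b j ≠ ⊤ := by
    intro ht; rw [ht, top_add] at hxb; exact WithTop.coe_ne_top hxb
  have hxb' : x b = tval (V b j) + lam j := by
    rw [← coe_tval hVbj, ← WithTop.coe_add] at hxb
    exact_mod_cast hxb
  have hxa : ((x a : ℝ) : Trop) ≤ V a j + (lam j : Trop) := by
    rw [h a]; exact Finset.inf_le (Finset.mem_univ j)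
  have hterm : ((x a - x b : ℝ) : Trop) ≤ V a j + (((-(tval (V b j))) : ℝ) : Trop) := by
    by_cases hVaj : V a j = ⊤
    · rw [hVaj, top_add]; exact le_top
    · rw [← coe_tval hVaj, ← WithTop.coe_add, WithTop.coe_le_coe]
      rw [← coe_tval hVaj, ← WithTop.coe_add, WithTop.coe_le_coe] at hxa
      rw [hxb']; linarith
  refine le_trans hterm ?_
  rw [CC_eq hV]
  exact Finset.le_sup' (fun j => V a j + (((-(tval (V b j))) : ℝ) : Trop))
    (Finset.mem_filter.mpr ⟨Finset.mem_univ j, hVbj⟩)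

/-- big-M realizer points -/
lemma MPT (hV : DoublyRAstic V) (l k : Fin n) (j0 : Fin m) (hl : V l j0 ≠ ⊤) (M : ℝ) :
    ∃ x ∈ tconvM V, x l ≤ tval (V l j0) ∧ V k j0 ⊓ ((M : ℝ) : Trop) ≤ ((x k : ℝ) : Trop) := by
  have hnn : (Finset.univ : Finset (Fin n)).Nonempty := ⟨l, Finset.mem_univ l⟩
  set cmin : ℝ := Finset.univ.inf' hnn (fun a => tval (Finset.univ.inf fun j => V a j)) with hcm
  set lam : Fin m → ℝ := fun j => if j = j0 then 0 else M - cmin with hlamdef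
  refine ⟨vpt V lam, vpt_mem hV lam, ?_, ?_⟩
  · have h1 : ((vpt V lam l : ℝ) : Trop) ≤ V l j0 + ((lam j0 : ℝ) : Trop) := by
      rw [coe_vpt hV]; exact Finset.inf_le (Finset.mem_univ j0)
    have : lam j0 = 0 := by simp [hlamdef]
    rw [this, ← coe_tval hl, ← WithTop.coe_add, WithTop.coe_le_coe] at h1
    linarith
  · rw [coe_vpt hV]
    refine Finset.le_inf (fun j _ => ?_)
    by_cases hj : j = j0
    · have hl0 : lam j = 0 := by simp [hlamdef, hj]
      rw [hl0, hj]
      calc V k j0 ⊓ ((M : ℝ) : Trop) ≤ V k j0 := inf_le_left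
        _ = V k j0 + ((0 : ℝ) : Trop) := by
            rw [show ((0:ℝ) : Trop) = (0 : Trop) from rfl, add_zero]
    · by_cases hVkj : V k j = ⊤
      · rw [hVkj, top_add]; exact le_top
      · have hlj : lam j = M - cmin := by simp [hlamdef, hj]
        have hrow : (Finset.univ.inf fun j' => V k j') ≠ ⊤ := by
          obtain ⟨j', hj'⟩ := hV.1 k
          intro ht
          have := Finset.inf_le (f := fun j' => V k j') (Finset.mem_univ j')
          rw [ht, top_le_iff] at this
          exact hj' this
        have hcle : cmin ≤ tval (V k j) := by
          have h2 : (Finset.univ.inf fun j' => V k j') ≤ V k j :=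
            Finset.inf_le (Finset.mem_univ j)
          rw [← coe_tval hrow, ← coe_tval hVkj, WithTop.coe_le_coe] at h2
          calc cmin ≤ tval (Finset.univ.inf fun j' => V k j') :=
                Finset.inf'_le _ (Finset.mem_univ k)
            _ ≤ _ := h2
        rw [hlj, ← coe_tval hVkj, ← WithTop.coe_add]
        calc V k j0 ⊓ ((M : ℝ) : Trop) ≤ ((M : ℝ) : Trop) := inf_le_right
          _ ≤ _ := by rw [WithTop.coe_le_coe]; linarith

/-- upper bounds over the polytope dominate CC -/
lemma CC_le_of_bound (hV : DoublyRAstic V) (k l : Fin n) (bound : ℝ)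
    (hb : ∀ x ∈ tconvM V, x k - x l ≤ bound) : CC V k l ≤ ((bound : ℝ) : Trop) := by
  rw [CC_eq hV]
  apply Finset.sup'_le
  intro j hj
  have hVlj : V l j ≠ ⊤ := (Finset.mem_filter.mp hj).2
  obtain ⟨x, hx, hxl, hxk⟩ := MPT hV l k j hVlj (bound + tval (V l j) + 1)
  have hxkb : x k ≤ bound + x l := by linarith [hb x hx]
  have hVk : V k j ⊓ (((bound + tval (V l j) + 1 : ℝ)) : Trop) ≤
      (((bound + tval (V l j) : ℝ)) : Trop) := by
    refine le_trans hxk ?_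
    rw [WithTop.coe_le_coe]; linarith
  have hVkj : V k j ≤ (((bound + tval (V l j) : ℝ)) : Trop) := by
    rcases le_total (V k j) (((bound + tval (V l j) + 1 : ℝ)) : Trop) with h | h
    · rwa [inf_eq_left.mpr h] at hVk
    · exfalso
      rw [inf_eq_right.mpr h, WithTop.coe_le_coe] at hVk
      linarith
  calc V k j + (((-(tval (V l j))) : ℝ) : Trop)
      ≤ (((bound + tval (V l j) : ℝ)) : Trop) + (((-(tval (V l j))) : ℝ) : Trop) := by
        exact add_le_add_left hVkj _
    _ = ((bound : ℝ) : Trop) := by rw [← WithTop.coe_add]; norm_num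

/-- triangle inequality for CC -/
lemma CC_triangle (hV : DoublyRAstic V) (i l k : Fin n) :
    CC V i k ≤ CC V i l + CC V l k := by
  by_cases h1 : CC V i l = ⊤
  · rw [h1, top_add]; exact le_top
  by_cases h2 : CC V l k = ⊤
  · rw [h2, add_top]; exact le_top
  have hb : ∀ x ∈ tconvM V, x i - x k ≤ tval (CC V i l) + tval (CC V l k) := by
    intro x hx
    have e1 := mem_le_CC hV hx i l
    have e2 := mem_le_CC hV hx l k
    rw [← coe_tval h1, WithTop.coe_le_coe] at e1
    rw [← coe_tval h2, WithTop.coe_le_coe] at e2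
    linarith
  calc CC V i k ≤ _ := CC_le_of_bound hV i k _ hb
    _ = CC V i l + CC V l k := by rw [WithTop.coe_add, coe_tval h1, coe_tval h2]


lemma coe_sub_le {a b : ℝ} {c : Trop} (h : ((a : ℝ) : Trop) ≤ c + ((b : ℝ) : Trop)) :
    ((a - b : ℝ) : Trop) ≤ c := by
  cases c with
  | none => exact le_top
  | some r =>
    rw [show (some r : Trop) = ((r : ℝ) : Trop) from rfl] at h ⊢
    have h' : a ≤ r + b := by exact_mod_cast h
    exact_mod_cast (by linarith : a - b ≤ r)

lemma le_add_of_coe_sub_le {a b : ℝ} {c : Trop} (h : ((a - b : ℝ) : Trop) ≤ c) :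
    ((a : ℝ) : Trop) ≤ c + ((b : ℝ) : Trop) := by
  cases c with
  | none =>
    exact le_of_le_of_eq (le_top : ((a:ℝ):Trop) ≤ ⊤) (top_add _).symm
  | some r =>
    rw [show (some r : Trop) = ((r : ℝ) : Trop) from rfl] at h ⊢
    have h' : a - b ≤ r := by exact_mod_cast h
    exact_mod_cast (by linarith : a ≤ r + b)

lemma mpMul_id (A : Matrix (Fin n) (Fin n) Trop) : mpMul mpId A = A := by
  funext i j
  apply le_antisymm
  · calc mpMul mpId A i j ≤ mpId i i + A i j := Finset.inf_le (Finset.mem_univ i)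
      _ = A i j := by rw [mpId, if_pos rfl, zero_add]
  · refine Finset.le_inf (fun k _ => ?_)
    by_cases hk : i = k
    · subst hk; rw [mpId, if_pos rfl, zero_add]
    · rw [mpId, if_neg hk, top_add]; exact le_top

lemma CC_le_mpPow (hV : DoublyRAstic V) :
    ∀ p, 1 ≤ p → ∀ i j : Fin n, CC V i j ≤ mpPow (CC V) p i j := by
  intro p
  induction p with
  | zero => omega
  | succ q ih =>
    intro _ i j
    by_cases hq : q = 0
    · subst hq
      show CC V i j ≤ mpMul (mpPow (CC V) 0) (CC V) i j
      rw [show mpPow (CC V) 0 = mpId from rfl, mpMul_id]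
    · have hq1 : 1 ≤ q := Nat.one_le_iff_ne_zero.mpr hq
      show CC V i j ≤ mpMul (mpPow (CC V) q) (CC V) i j
      refine Finset.le_inf (fun k _ => ?_)
      calc CC V i j ≤ CC V i k + CC V k j := CC_triangle hV i k j
        _ ≤ mpPow (CC V) q i k + CC V k j := add_le_add_left (ih hq1 i k) _

lemma two_le_of_ne {i j : Fin n} (hij : i ≠ j) : 2 ≤ n := by
  by_contra h
  push_neg at h
  interval_cases n
  · exact i.elim0
  · exact hij (Subsingleton.elim i j)

lemma kleene_CC (hV : DoublyRAstic V) : kleene (CC V) = CC V := by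
  funext i j
  have hn : 0 < n := i.pos
  by_cases hij : i = j
  · subst hij
    apply le_antisymm
    · calc kleene (CC V) i i ≤ mpPow (CC V) 0 i i :=
          Finset.inf_le (Finset.mem_range.mpr hn)
        _ = 0 := by rw [show mpPow (CC V) 0 = mpId from rfl, mpId, if_pos rfl]
        _ = CC V i i := (CC_diag hV i).symm
    · refine Finset.le_inf (fun p _ => ?_)
      by_cases hp : p = 0
      · subst hp
        rw [show mpPow (CC V) 0 = mpId from rfl, mpId, if_pos rfl, CC_diag hV]
      · exact CC_le_mpPow hV p (Nat.one_le_iff_ne_zero.mpr hp) i i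
  · apply le_antisymm
    · calc kleene (CC V) i j ≤ mpPow (CC V) 1 i j :=
          Finset.inf_le (Finset.mem_range.mpr (two_le_of_ne hij))
        _ = CC V i j := by
          show mpMul (mpPow (CC V) 0) (CC V) i j = CC V i j
          rw [show mpPow (CC V) 0 = mpId from rfl, mpMul_id]
    · refine Finset.le_inf (fun p _ => ?_)
      by_cases hp : p = 0
      · subst hp
        rw [show mpPow (CC V) 0 = mpId from rfl, mpId, if_neg hij]
        exact le_top
      · exact CC_le_mpPow hV p (Nat.one_le_iff_ne_zero.mpr hp) i j

lemma tconvM_CC_eq_wdp (hV : DoublyRAstic V) : tconvM (CC V) = wdp (CC V) := by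
  ext x
  constructor
  · rintro ⟨lam, h⟩ i j hij
    have hne : (Finset.univ : Finset (Fin n)).Nonempty := ⟨i, Finset.mem_univ i⟩
    obtain ⟨k0, -, hk0⟩ := Finset.exists_mem_eq_inf Finset.univ hne
      (fun k => CC V j k + ((lam k : ℝ) : Trop))
    have hxj : ((x j : ℝ) : Trop) = CC V j k0 + (lam k0 : Trop) := by rw [h j, hk0]
    have hCjk : CC V j k0 ≠ ⊤ := by
      intro ht; rw [ht, top_add] at hxj; exact WithTop.coe_ne_top hxj
    have hxj' : x j = tval (CC V j k0) + lam k0 := by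
      rw [← coe_tval hCjk, ← WithTop.coe_add] at hxj
      exact_mod_cast hxj
    have hxi : ((x i : ℝ) : Trop) ≤ CC V i k0 + (lam k0 : Trop) := by
      rw [h i]; exact Finset.inf_le (Finset.mem_univ k0)
    have h2 : ((x i : ℝ) : Trop) ≤ CC V i j + ((x j : ℝ) : Trop) := by
      calc ((x i : ℝ) : Trop) ≤ CC V i k0 + (lam k0 : Trop) := hxi
        _ ≤ (CC V i j + CC V j k0) + (lam k0 : Trop) :=
            add_le_add_left (CC_triangle hV i j k0) _
        _ = CC V i j + ((x j : ℝ) : Trop) := by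
            rw [hxj, add_assoc]
    exact coe_sub_le (by calc ((x i : ℝ) : Trop) ≤ _ := h2)
  · intro hx
    refine ⟨x, fun i => le_antisymm ?_ ?_⟩
    · refine Finset.le_inf (fun k _ => ?_)
      by_cases hk : i = k
      · subst hk
        rw [CC_diag hV, zero_add]
      · exact le_add_of_coe_sub_le (hx i k hk)
    · calc (Finset.univ.inf fun k => CC V i k + ((x k : ℝ) : Trop))
          ≤ CC V i i + ((x i : ℝ) : Trop) := Finset.inf_le (Finset.mem_univ i)
        _ = ((x i : ℝ) : Trop) := by rw [CC_diag hV, zero_add]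

lemma path_telescope {E : Fin n → Fin n → Prop} {w : Fin n → Fin n → ℝ} {g : Fin n → ℝ}
    (hw : ∀ a b, E a b → g b - g a ≤ w a b) :
    ∀ (p : List (Fin n)) (j i : Fin n), p.head? = some j → p.getLast? = some i →
      p.Chain' E → g i - g j ≤ pathWeight w p := by
  intro p
  induction p with
  | nil => intro j i hh; simp at hh
  | cons a t ih =>
    intro j i hh hl hc
    have hja : j = a := by
      simp only [List.head?_cons, Option.some.injEq] at hh
      exact hh.symm
    cases t with
    | nil =>
      have : i = a := (by simpa using hl : a = i).symm
      rw [hja, this]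
      simp [pathWeight]
    | cons b t' =>
      have hE : E a b ∧ (b :: t').Chain' E := List.isChain_cons_cons.mp hc
      have hl' : (b :: t').getLast? = some i := by
        rw [List.getLast?_cons_cons] at hl; exact hl
      have ih' := ih b i rfl hl' hE.2
      have hw' := hw a b hE.1
      have hpw : pathWeight w (a :: b :: t') = w a b + pathWeight w (b :: t') := by
        simp [pathWeight]
      rw [hja, hpw]
      linarith
  
lemma noNegCycle_CC (hV : DoublyRAstic V) : NoNegCycle (CC V) := by
  intro j p hp
  obtain ⟨x0, hx0⟩ := tconvM_nonempty hV
  have hw : ∀ a b, (fun a b => CC V b a ≠ ⊤) a b → x0 b - x0 a ≤ cw (CC V) a b := by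
    intro a b hE
    have := mem_le_CC hV hx0 b a
    rw [← coe_tval hE, WithTop.coe_le_coe] at this
    exact this
  have := path_telescope hw p j j hp.1 hp.2.1 hp.2.2
  linarith


/-! ## Convex geometry part -/

/-- polyhedron piece given by difference constraints -/
def piece {n : ℕ} (E : Finset (Fin n × Fin n)) (bb : Fin n × Fin n → ℝ) : Set (Fin n → ℝ) :=
  {x | ∀ e ∈ E, x e.1 - x e.2 ≤ bb e}

/-- alcoved cone -/
def alC {n : ℕ} (D : Finset (Fin n × Fin n)) : Set (Fin n → ℝ) :=
  {d | ∀ e ∈ D, d e.1 ≤ d e.2}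

lemma alC_eq_piece {n : ℕ} (D : Finset (Fin n × Fin n)) : alC D = piece D (fun _ => 0) := by
  ext x
  constructor
  · intro h e he; simpa [sub_nonpos] using h e he
  · intro h e he; have := h e he; simpa [sub_nonpos] using this

lemma isClosed_piece {n : ℕ} (E : Finset (Fin n × Fin n)) (bb : Fin n × Fin n → ℝ) :
    IsClosed (piece E bb) := by
  have : piece E bb = ⋂ e ∈ E, {x : Fin n → ℝ | x e.1 - x e.2 ≤ bb e} := by
    ext x; simp [piece]
  rw [this]
  exact isClosed_biInter (fun e _ =>
    isClosed_le (Continuous.sub (continuous_apply e.1) (continuous_apply e.2)) continuous_const)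

lemma isClosed_alC {n : ℕ} (D : Finset (Fin n × Fin n)) : IsClosed (alC D) := by
  rw [alC_eq_piece]; exact isClosed_piece _ _

lemma alC_smul {n : ℕ} {D : Finset (Fin n × Fin n)} {c : ℝ} (hc : 0 ≤ c) {d : Fin n → ℝ}
    (hd : d ∈ alC D) : c • d ∈ alC D := by
  intro e he
  have := hd e he
  simpa using mul_le_mul_of_nonneg_left this hc

/-- elementary covering lemma: a convex set covered by finitely many closed sets
contains a relative ball inside one of them. -/
lemma cover_rel_ball {n : ℕ} {ι : Type*} (s : Finset ι) (F : ι → Set (Fin n → ℝ))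
    (hF : ∀ i ∈ s, IsClosed (F i)) :
    ∀ T : Set (Fin n → ℝ), Convex ℝ T → T.Nonempty → (T ⊆ ⋃ i ∈ s, F i) →
      ∃ i ∈ s, ∃ x0 ∈ T, ∃ ρ > (0:ℝ), T ∩ Metric.ball x0 ρ ⊆ F i := by
  classical
  induction s using Finset.induction_on with
  | empty =>
    rintro T - ⟨p, hp⟩ hsub
    simpa using hsub hp
  | @insert a s ha ih =>
    intro T hTc hTne hsub
    by_cases hTa : T ⊆ F a
    · obtain ⟨p, hp⟩ := hTne
      exact ⟨a, Finset.mem_insert_self a s, p, hp, 1, one_pos, fun y hy => hTa hy.1⟩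
    · obtain ⟨p, hp, hpa⟩ := Set.not_subset.mp hTa
      have hopen : IsOpen (F a)ᶜ := (hF a (Finset.mem_insert_self a s)).isOpen_compl
      obtain ⟨ε, hε, hball⟩ := Metric.isOpen_iff.mp hopen p hpa
      have hT' : T ∩ Metric.ball p ε ⊆ ⋃ i ∈ s, F i := by
        intro x hx
        have := hsub hx.1
        simp only [Set.mem_iUnion] at this ⊢
        obtain ⟨i, hi, hxi⟩ := this
        rcases Finset.mem_insert.mp hi with rfl | his
        · exact absurd hxi (hball hx.2)
        · exact ⟨i, his, hxi⟩
      obtain ⟨i, his, x0, hx0, ρ', hρ', hsub'⟩ :=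
        ih (fun i hi => hF i (Finset.mem_insert_of_mem hi))
          (T ∩ Metric.ball p ε) (hTc.inter (convex_ball p ε))
          ⟨p, hp, Metric.mem_ball_self hε⟩ hT'
      refine ⟨i, Finset.mem_insert_of_mem his, x0, hx0.1,
        min ρ' (ε - dist x0 p), ?_, ?_⟩
      · have : dist x0 p < ε := hx0.2
        simp only [lt_min_iff]
        exact ⟨hρ', by linarith⟩
      · intro y hy
        have hd1 : dist y x0 < ρ' := lt_of_lt_of_le hy.2 (min_le_left _ _)
        have hd2 : dist y x0 < ε - dist x0 p := lt_of_lt_of_le hy.2 (min_le_right _ _)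
        have : dist y p < ε := by
          calc dist y p ≤ dist y x0 + dist x0 p := dist_triangle y x0 p
            _ < ε := by linarith
        exact hsub' ⟨⟨hy.1, this⟩, hd1⟩

/-- the set of directions entering a set from a point -/
def tangentSet {n : ℕ} (S : Set (Fin n → ℝ)) (w : Fin n → ℝ) : Set (Fin n → ℝ) :=
  {d | ∃ ε : ℝ, 0 < ε ∧ w + ε • d ∈ S}

lemma tangent_shrink {n : ℕ} {S : Set (Fin n → ℝ)} (hS : Convex ℝ S) {w : Fin n → ℝ}
    (hw : w ∈ S) {d : Fin n → ℝ} {ε : ℝ} (hε : 0 < ε) (hmem : w + ε • d ∈ S)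
    {ε' : ℝ} (h0 : 0 < ε') (h1 : ε' ≤ ε) : w + ε' • d ∈ S := by
  have hεne : ε ≠ 0 := ne_of_gt hε
  have h2 : (1 - ε'/ε) • w + (ε'/ε) • (w + ε • d) = w + ε' • d := by
    rw [smul_add, smul_smul, div_mul_cancel₀ _ hεne, ← add_assoc, ← add_smul]
    have h3 : (1 - ε'/ε) + ε'/ε = 1 := by ring
    rw [h3, one_smul]
  rw [← h2]
  have hnn : 0 ≤ 1 - ε'/ε := by
    rw [sub_nonneg]
    exact div_le_one_of_le₀ h1 (le_of_lt hε)
  exact hS hw hmem hnn (by positivity) (by ring)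

lemma mem_tangent_of_mem {n : ℕ} {S : Set (Fin n → ℝ)} {w x : Fin n → ℝ} (hx : x ∈ S) :
    x - w ∈ tangentSet S w := ⟨1, one_pos, by simpa using hx⟩

lemma tangent_convex {n : ℕ} {S : Set (Fin n → ℝ)} (hS : Convex ℝ S) {w : Fin n → ℝ}
    (hw : w ∈ S) : Convex ℝ (tangentSet S w) := by
  rintro d ⟨ε, hε, hd⟩ d' ⟨ε', hε', hd'⟩ a b ha hb hab
  have hm : 0 < min ε ε' := lt_min hε hε'
  have h1 : w + min ε ε' • d ∈ S := tangent_shrink hS hw hε hd hm (min_le_left _ _)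
  have h2 : w + min ε ε' • d' ∈ S := tangent_shrink hS hw hε' hd' hm (min_le_right _ _)
  have key : a • (w + min ε ε' • d) + b • (w + min ε ε' • d') =
      (a + b) • w + min ε ε' • (a • d + b • d') := by module
  have hmem := hS h1 h2 ha hb hab
  rw [key, hab, one_smul] at hmem
  exact ⟨min ε ε', hm, hmem⟩


lemma le_of_forall_pos' {A B : ℝ} (h : ∀ η > 0, A ≤ B + η) : A ≤ B := by
  by_contra hc
  push_neg at hc
  have := h ((A - B)/2) (by linarith)
  linarith

theorem tangent_rep {n : ℕ} {ι : Type*} [Fintype ι] (E : ι → Finset (Fin n × Fin n))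
    (bb : ι → (Fin n × Fin n) → ℝ) {S : Set (Fin n → ℝ)}
    (hS : S = ⋃ i, piece (E i) (bb i)) (hconv : Convex ℝ S) {w : Fin n → ℝ} (hw : w ∈ S) :
    tangentSet S w = ⋃ i : {i : ι // w ∈ piece (E i) (bb i)},
      alC ((E i.1).filter (fun e => w e.1 - w e.2 = bb i.1 e)) := by
  apply Set.Subset.antisymm
  · rintro d ⟨ε, hε, hd⟩
    have hseq : ∀ k : ℕ, w + (ε/(k+1)) • d ∈ S := by
      intro k
      refine tangent_shrink hconv hw hε hd (by positivity) ?_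
      rw [div_le_iff₀ (by positivity)]
      nlinarith [Nat.cast_nonneg (α := ℝ) k]
    have hch : ∀ k : ℕ, ∃ i : ι, w + (ε/(k+1)) • d ∈ piece (E i) (bb i) := by
      intro k
      have h1 := hseq k
      rw [hS] at h1
      simpa [Set.mem_iUnion] using h1
    choose g hg using hch
    obtain ⟨i0, hfib⟩ := Finite.exists_infinite_fiber g
    have hfib' : {k : ℕ | g k = i0}.Infinite := by
      rw [← Set.infinite_coe_iff]
      exact hfib
    have hwp : w ∈ piece (E i0) (bb i0) := by
      intro e he
      refine le_of_forall_pos' ?_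
      intro η hη
      set s0 : ℝ := |d e.1| + |d e.2| with hs0
      have hs0nn : 0 ≤ s0 := by positivity
      obtain ⟨K, hK⟩ := exists_nat_gt ((ε * s0) / η)
      obtain ⟨k, hk, hkK⟩ := hfib'.exists_gt K
      set c : ℝ := ε/(k+1) with hc
      have hcpos : 0 < c := by positivity
      have hmem := hg k
      rw [hk] at hmem
      have h1 := hmem e he
      simp only [Pi.add_apply, Pi.smul_apply, smul_eq_mul] at h1
      have hcs : c * s0 < η := by
        have hKk : ((K:ℝ)) < (k:ℝ) + 1 := by
          have : (K:ℝ) < (k:ℝ) := by exact_mod_cast hkK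
          linarith
        have h5 : ε * s0 < η * ((k:ℝ)+1) := by
          have h6 : (ε * s0)/η < (k:ℝ)+1 := lt_trans hK hKk
          calc ε * s0 = ((ε * s0)/η) * η := by field_simp
            _ < ((k:ℝ)+1) * η := mul_lt_mul_of_pos_right h6 hη
            _ = η * ((k:ℝ)+1) := by ring
        rw [hc, div_mul_eq_mul_div, div_lt_iff₀ (by positivity)]
        linarith
      have habs : d e.2 - d e.1 ≤ s0 := by
        rw [hs0]
        have := le_abs_self (d e.2)
        have := neg_abs_le (d e.1)
        linarith
      have h7 : c * (d e.2 - d e.1) ≤ c * s0 :=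
        mul_le_mul_of_nonneg_left habs (le_of_lt hcpos)
      linarith
    refine Set.mem_iUnion.mpr ⟨⟨i0, hwp⟩, ?_⟩
    intro e he
    rw [Finset.mem_filter] at he
    obtain ⟨k, hk⟩ := hfib'.nonempty
    have hmem := hg k
    rw [hk] at hmem
    have h1 := hmem e he.1
    simp only [Pi.add_apply, Pi.smul_apply, smul_eq_mul] at h1
    have hcpos : (0:ℝ) < ε/(k+1) := by positivity
    nlinarith [he.2]
  · intro d hd
    rw [Set.mem_iUnion] at hd
    obtain ⟨⟨i, hwp⟩, hdi⟩ := hd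
    set inact := (E i).filter (fun e => ¬ (w e.1 - w e.2 = bb i e)) with hinact
    set δ : ℝ := if h : inact.Nonempty then inact.inf' h (fun e => bb i e - (w e.1 - w e.2)) else 1
      with hδdef
    have hδpos : 0 < δ := by
      rw [hδdef]
      split_ifs with h
      · rw [Finset.lt_inf'_iff]
        intro e he
        rw [hinact, Finset.mem_filter] at he
        have h1 := hwp e he.1
        have h2 := he.2
        cases lt_or_eq_of_le h1 with
        | inl h3 => linarith
        | inr h3 => exact absurd h3 h2
      · exact one_pos
    set ε : ℝ := δ/(2*‖d‖+1) with hεdef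
    have hεpos : 0 < ε := by
      have : (0:ℝ) ≤ ‖d‖ := norm_nonneg d
      rw [hεdef]; positivity
    refine ⟨ε, hεpos, ?_⟩
    rw [hS]
    refine Set.mem_iUnion.mpr ⟨i, ?_⟩
    intro e he
    simp only [Pi.add_apply, Pi.smul_apply, smul_eq_mul]
    by_cases hact : w e.1 - w e.2 = bb i e
    · have h1 : d e.1 ≤ d e.2 := hdi e (Finset.mem_filter.mpr ⟨he, hact⟩)
      nlinarith
    · have hein : e ∈ inact := by
        rw [hinact, Finset.mem_filter]; exact ⟨he, hact⟩
      have hslack : δ ≤ bb i e - (w e.1 - w e.2) := by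
        rw [hδdef]
        rw [dif_pos ⟨e, hein⟩]
        exact Finset.inf'_le _ hein
      have hb1 : |d e.1| ≤ ‖d‖ := by
        simpa using norm_le_pi_norm d e.1
      have hb2 : |d e.2| ≤ ‖d‖ := by
        simpa using norm_le_pi_norm d e.2
      have hεsmall : ε * (2*‖d‖) < δ := by
        rw [hεdef, div_mul_eq_mul_div, div_lt_iff₀ (by positivity)]
        nlinarith [norm_nonneg d, hδpos]
      have h8 : ε * (d e.1 - d e.2) ≤ ε * (2*‖d‖) := by
        apply mul_le_mul_of_nonneg_left _ (le_of_lt hεpos)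
        have := le_abs_self (d e.1)
        have := neg_abs_le (d e.2)
        linarith
      linarith


section ConeLemma

variable {n : ℕ}

lemma T_smul {ι : Type*} {D : ι → Finset (Fin n × Fin n)} {c : ℝ} (hc : 0 ≤ c)
    {d : Fin n → ℝ} (hd : d ∈ ⋃ i, alC (D i)) : c • d ∈ ⋃ i, alC (D i) := by
  rw [Set.mem_iUnion] at hd ⊢
  obtain ⟨i, hi⟩ := hd
  exact ⟨i, alC_smul hc hi⟩

lemma T_add {ι : Type*} {D : ι → Finset (Fin n × Fin n)}
    (hconv : Convex ℝ (⋃ i, alC (D i))) {a b : Fin n → ℝ}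
    (ha : a ∈ ⋃ i, alC (D i)) (hb : b ∈ ⋃ i, alC (D i)) : a + b ∈ ⋃ i, alC (D i) := by
  have h1 : (1/2:ℝ) • a + (1/2:ℝ) • b ∈ ⋃ i, alC (D i) :=
    hconv ha hb (by norm_num) (by norm_num) (by norm_num)
  have h2 := T_smul (by norm_num : (0:ℝ) ≤ 2) h1
  rwa [show (2:ℝ) • ((1/2:ℝ) • a + (1/2:ℝ) • b) = a + b by module] at h2

lemma T_zero {ι : Type*} [Nonempty ι] {D : ι → Finset (Fin n × Fin n)} :
    (0 : Fin n → ℝ) ∈ ⋃ i, alC (D i) := by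
  rw [Set.mem_iUnion]
  refine ⟨Classical.arbitrary ι, fun e _ => le_refl _⟩

/-- lineality space -/
def linA {ι : Type*} [Nonempty ι] (D : ι → Finset (Fin n × Fin n))
    (hconv : Convex ℝ (⋃ i, alC (D i))) : Submodule ℝ (Fin n → ℝ) where
  carrier := {d | d ∈ (⋃ i, alC (D i)) ∧ -d ∈ (⋃ i, alC (D i))}
  add_mem' := by
    rintro a b ⟨ha1, ha2⟩ ⟨hb1, hb2⟩
    refine ⟨T_add hconv ha1 hb1, ?_⟩
    rw [neg_add]
    exact T_add hconv ha2 hb2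
  zero_mem' := by
    refine ⟨T_zero, ?_⟩
    rw [neg_zero]
    exact T_zero
  smul_mem' := by
    rintro c d ⟨h1, h2⟩
    rcases le_or_gt 0 c with hc | hc
    · refine ⟨T_smul hc h1, ?_⟩
      rw [← smul_neg]
      exact T_smul hc h2
    · have hc' : 0 ≤ -c := by linarith
      constructor
      · rw [show c • d = (-c) • (-d) by module]
        exact T_smul hc' h2
      · rw [show -(c • d) = (-c) • d by module]
        exact T_smul hc' h1

lemma mem_linA {ι : Type*} [Nonempty ι] {D : ι → Finset (Fin n × Fin n)}
    {hconv : Convex ℝ (⋃ i, alC (D i))} {v : Fin n → ℝ} :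
    v ∈ linA D hconv ↔ (v ∈ (⋃ i, alC (D i)) ∧ -v ∈ (⋃ i, alC (D i))) := Iff.rfl

theorem coneLemma (N : ℕ) : ∀ (ι : Type) [Fintype ι] [Nonempty ι]
    (D : ι → Finset (Fin n × Fin n)) (hconv : Convex ℝ (⋃ i, alC (D i)))
    (_ : n ≤ N + Module.finrank ℝ (linA D hconv)) (dstar : Fin n → ℝ)
    (_ : ∀ k l : Fin n, (∀ d ∈ ⋃ i, alC (D i), d k ≤ d l) → dstar k ≤ dstar l),
    dstar ∈ ⋃ i, alC (D i) := by
  induction N with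
  | zero =>
    intro ι _ _ D hconv hrk dstar hval
    have h1 : Module.finrank ℝ (linA D hconv) ≤ n := by
      have := Submodule.finrank_le (linA D hconv)
      rwa [Module.finrank_fin_fun] at this
    have h2 : Module.finrank ℝ (linA D hconv) = n := by omega
    have h3 : linA D hconv = ⊤ := by
      apply Submodule.eq_top_of_finrank_eq
      rw [Module.finrank_fin_fun]
      exact h2
    have h4 : dstar ∈ linA D hconv := by rw [h3]; trivial
    exact (mem_linA.mp h4).1
  | succ N ih =>
    intro ι instF instN D hconv hrk dstar hval
    have hT_closed : IsClosed (⋃ i, alC (D i)) :=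
      isClosed_iUnion_of_finite (fun i => isClosed_alC (D i))
    have hcovsub : (⋃ i, alC (D i)) ⊆ ⋃ i ∈ (Finset.univ : Finset ι), alC (D i) := by
      intro x hx
      rw [Set.mem_iUnion] at hx
      obtain ⟨i, hi⟩ := hx
      exact Set.mem_biUnion (Finset.mem_univ i) hi
    by_cases hsub : ∀ d ∈ ⋃ i, alC (D i), -d ∈ ⋃ i, alC (D i)
    · -- SUBSPACE CASE
      obtain ⟨f0, -, x0, hx0T, ρ, hρ, hball⟩ :=
        cover_rel_ball Finset.univ (fun i => alC (D i)) (fun i _ => isClosed_alC (D i))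
          (⋃ i, alC (D i)) hconv ⟨0, T_zero⟩ hcovsub
      set B0 := (D f0).filter (fun e => ∀ d ∈ ⋃ i, alC (D i), d e.1 = d e.2) with hB0
      -- strictness off B0
      have key1 : ∀ e ∈ D f0, e ∉ B0 → x0 e.1 < x0 e.2 := by
        intro e he heB
        rw [hB0, Finset.mem_filter] at heB
        push_neg at heB
        obtain ⟨a, haT, hane⟩ := heB he
        set ε : ℝ := ρ/(2*(‖a‖+1)) with hεdef
        have hεpos : 0 < ε := by
          have := norm_nonneg a
          rw [hεdef]; positivity
        have hdist : ∀ b : Fin n → ℝ, ‖b‖ = ‖a‖ → dist (x0 + ε • b) x0 < ρ := by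
          intro b hba
          rw [dist_eq_norm, add_sub_cancel_left, norm_smul, Real.norm_eq_abs,
            abs_of_pos hεpos, hba, hεdef]
          rw [div_mul_eq_mul_div, div_lt_iff₀ (by positivity)]
          nlinarith [norm_nonneg a]
        have hmm : ∀ b : Fin n → ℝ, b ∈ ⋃ i, alC (D i) → ‖b‖ = ‖a‖ →
            (x0 + ε • b) e.1 ≤ (x0 + ε • b) e.2 := by
          intro b hbT hba
          have h1 : x0 + ε • b ∈ ⋃ i, alC (D i) :=
            T_add hconv hx0T (T_smul (le_of_lt hεpos) hbT)
          exact hball ⟨h1, hdist b hba⟩ e he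
        have hp := hmm a haT rfl
        have hm := hmm (-a) (hsub a haT) (by rw [norm_neg])
        simp only [Pi.add_apply, Pi.smul_apply, Pi.neg_apply, smul_eq_mul] at hp hm
        rcases lt_or_gt_of_ne hane with h | h
        · nlinarith
        · nlinarith
      -- small perturbations within B0-equalities stay in T
      set inactB := (D f0) \ B0 with hinactB
      set δ0 : ℝ := if h : inactB.Nonempty then inactB.inf' h (fun e => x0 e.2 - x0 e.1) else 1
        with hδ0def
      have hδ0pos : 0 < δ0 := by
        rw [hδ0def]
        split_ifs with h
        · rw [Finset.lt_inf'_iff]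
          intro e he
          rw [hinactB, Finset.mem_sdiff] at he
          have := key1 e he.1 he.2
          linarith
        · exact one_pos
      have key2small : ∀ ζ : Fin n → ℝ, (∀ e ∈ B0, ζ e.1 = ζ e.2) → 2*‖ζ‖ < δ0 →
          ζ ∈ ⋃ i, alC (D i) := by
        intro ζ hζeq hζsmall
        have h1 : x0 + ζ ∈ alC (D f0) := by
          intro e he
          simp only [Pi.add_apply]
          by_cases heB : e ∈ B0
          · have hx0e : x0 e.1 = x0 e.2 := by
              rw [hB0, Finset.mem_filter] at heB
              exact heB.2 x0 hx0T
            rw [hx0e, hζeq e heB]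
          · have hein : e ∈ inactB := by
              rw [hinactB, Finset.mem_sdiff]; exact ⟨he, heB⟩
            have hslack : δ0 ≤ x0 e.2 - x0 e.1 := by
              rw [hδ0def, dif_pos ⟨e, hein⟩]
              exact Finset.inf'_le _ hein
            have hb1 : |ζ e.1| ≤ ‖ζ‖ := by simpa using norm_le_pi_norm ζ e.1
            have hb2 : |ζ e.2| ≤ ‖ζ‖ := by simpa using norm_le_pi_norm ζ e.2
            have := le_abs_self (ζ e.1)
            have := neg_abs_le (ζ e.2)
            linarith
        have h2 : x0 + ζ ∈ ⋃ i, alC (D i) := Set.mem_iUnion.mpr ⟨f0, h1⟩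
        have h3 := T_add hconv h2 (hsub x0 hx0T)
        rwa [show x0 + ζ + -x0 = ζ by module] at h3
      have key2 : ∀ ζ : Fin n → ℝ, (∀ e ∈ B0, ζ e.1 = ζ e.2) → ζ ∈ ⋃ i, alC (D i) := by
        intro ζ hζeq
        set c : ℝ := δ0/(2*(2*‖ζ‖+1)) with hcdef
        have hcpos : 0 < c := by
          have := norm_nonneg ζ
          rw [hcdef]; positivity
        have h1 : c • ζ ∈ ⋃ i, alC (D i) := by
          apply key2small
          · intro e he
            simp only [Pi.smul_apply, smul_eq_mul, hζeq e he]
          · rw [norm_smul, Real.norm_eq_abs, abs_of_pos hcpos]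
            have hc2 : c * (2*(2*‖ζ‖+1)) = δ0 := by
              rw [hcdef]; field_simp
            nlinarith [norm_nonneg ζ, hcpos]
        have h2 := T_smul (le_of_lt (inv_pos.mpr hcpos)) h1
        rwa [show c⁻¹ • (c • ζ) = ζ by
          rw [smul_smul, inv_mul_cancel₀ (ne_of_gt hcpos), one_smul]] at h2
      apply key2
      intro e he
      rw [hB0, Finset.mem_filter] at he
      have hv1 : dstar e.1 ≤ dstar e.2 :=
        hval e.1 e.2 (fun d hd => le_of_eq (he.2 d hd))
      have hv2 : dstar e.2 ≤ dstar e.1 :=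
        hval e.2 e.1 (fun d hd => le_of_eq (he.2 d hd).symm)
      linarith
    · -- MAIN CASE
      push_neg at hsub
      obtain ⟨u1, hu1T, hu1n⟩ := hsub
      by_contra hd
      -- tangent step via induction hypothesis
      have tangentStep : ∀ u, u ∈ (⋃ i, alC (D i)) → -u ∉ (⋃ i, alC (D i)) →
          ∃ ε : ℝ, 0 < ε ∧ u + ε • dstar ∈ ⋃ i, alC (D i) := by
        intro u huT hun
        have hrep0 : (⋃ i, alC (D i)) = ⋃ i, piece (D i) (fun _ => (0:ℝ)) := by
          apply Set.iUnion_congr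
          intro i
          exact alC_eq_piece (D i)
        have hupc : u ∈ ⋃ i, piece (D i) (fun _ => (0:ℝ)) := by rw [← hrep0]; exact huT
        have hne' : Nonempty {i : ι // u ∈ piece (D i) (fun _ => (0:ℝ))} := by
          rw [Set.mem_iUnion] at hupc
          obtain ⟨i, hi⟩ := hupc
          exact ⟨⟨i, hi⟩⟩
        set D' : {i : ι // u ∈ piece (D i) (fun _ => (0:ℝ))} → Finset (Fin n × Fin n) :=
          fun i => (D i.1).filter (fun e => u e.1 - u e.2 = (fun _ => (0:ℝ)) e) with hD'
        have hrep : tangentSet (⋃ i, alC (D i)) u = ⋃ i, alC (D' i) := by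
          rw [hrep0]
          exact tangent_rep D (fun _ => (fun _ => (0:ℝ))) rfl (hrep0 ▸ hconv)
            (hrep0 ▸ huT)
        have hconv' : Convex ℝ (⋃ i, alC (D' i)) := by
          rw [← hrep]
          exact tangent_convex hconv huT
        haveI := hne'
        have hLle : ∀ v, v ∈ linA D hconv → v ∈ linA D' hconv' := by
          intro v hv
          rw [mem_linA] at hv ⊢
          rw [← hrep]
          constructor
          · exact ⟨1, one_pos, by rw [one_smul]; exact T_add hconv huT hv.1⟩
          · exact ⟨1, one_pos, by rw [one_smul]; exact T_add hconv huT hv.2⟩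
        have huL' : u ∈ linA D' hconv' := by
          rw [mem_linA, ← hrep]
          constructor
          · refine ⟨1, one_pos, ?_⟩
            rw [one_smul, show u + u = (2:ℝ) • u by module]
            exact T_smul (by norm_num) huT
          · refine ⟨1/2, by norm_num, ?_⟩
            rw [show u + (1/2:ℝ) • (-u) = (1/2:ℝ) • u by module]
            exact T_smul (by norm_num) huT
        have huLn : u ∉ linA D hconv := fun h => hun (mem_linA.mp h).2
        have hlt : linA D hconv < linA D' hconv' := by
          rw [SetLike.lt_iff_le_and_exists]
          exact ⟨fun v hv => hLle v hv, u, huL', huLn⟩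
        have hfr : Module.finrank ℝ (linA D hconv) < Module.finrank ℝ (linA D' hconv') :=
          Submodule.finrank_lt_finrank_of_lt hlt
        have hrk' : n ≤ N + Module.finrank ℝ (linA D' hconv') := by omega
        have hval' : ∀ k l : Fin n, (∀ d ∈ ⋃ i, alC (D' i), d k ≤ d l) →
            dstar k ≤ dstar l := by
          intro k l hv
          apply hval
          intro x hx
          by_contra hxkl
          push_neg at hxkl
          have hxpos : 0 < x k - x l := sub_pos.mpr hxkl
          have hsc : ∀ c : ℝ, 0 < c → c * (x k - x l) ≤ u k - u l := by
            intro c hc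
            have h1 : c • x ∈ ⋃ i, alC (D i) := T_smul (le_of_lt hc) hx
            have h2 : c • x - u ∈ tangentSet (⋃ i, alC (D i)) u := mem_tangent_of_mem h1
            rw [hrep] at h2
            have h3 := hv _ h2
            simp only [Pi.sub_apply, Pi.smul_apply, smul_eq_mul] at h3
            linarith
          set c0 : ℝ := (|u k - u l| + 1)/(x k - x l) with hc0
          have hc0pos : 0 < c0 := by
            rw [hc0]
            exact div_pos (by positivity) hxpos
          have h5 := hsc c0 hc0pos
          rw [hc0, div_mul_cancel₀ _ (ne_of_gt hxpos)] at h5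
          have := le_abs_self (u k - u l)
          linarith
        have hmem := ih _ D' hconv' hrk' dstar hval'
        rw [← hrep] at hmem
        exact hmem
      -- reaching the lineality along dstar
      have key : ∀ v, v ∈ (⋃ i, alC (D i)) → -v ∉ (⋃ i, alC (D i)) →
          ∃ s : ℝ, 0 < s ∧ (v + s • dstar ∈ ⋃ i, alC (D i)) ∧
            (-(v + s • dstar) ∈ ⋃ i, alC (D i)) := by
        intro v hvT hvn
        set Sset : Set ℝ := {s : ℝ | 0 ≤ s ∧ v + s • dstar ∈ ⋃ i, alC (D i)} with hSset
        have hS0 : (0:ℝ) ∈ Sset := ⟨le_refl 0, by rw [zero_smul, add_zero]; exact hvT⟩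
        have hSclosed : IsClosed Sset := by
          have heq : Sset = {s : ℝ | 0 ≤ s} ∩
              ((fun s : ℝ => v + s • dstar) ⁻¹' (⋃ i, alC (D i))) := rfl
          rw [heq]
          refine (isClosed_le continuous_const continuous_id).inter ?_
          exact hT_closed.preimage
            (Continuous.add continuous_const (continuous_id.smul continuous_const))
        have hSbdd : BddAbove Sset := by
          by_contra hbdd
          rw [not_bddAbove_iff] at hbdd
          have hsq : ∀ k : ℕ, ∃ s, s ∈ Sset ∧ ((k:ℝ)+1) < s := fun k => hbdd ((k:ℝ)+1)
          choose sq hsq1 hsq2 using hsq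
          have hsqpos : ∀ k, (0:ℝ) < sq k := fun k =>
            lt_of_le_of_lt (by positivity) (hsq2 k)
          have hmemk : ∀ k : ℕ, (sq k)⁻¹ • v + dstar ∈ ⋃ i, alC (D i) := by
            intro k
            have h1 := (hsq1 k).2
            have h2 := T_smul (le_of_lt (inv_pos.mpr (hsqpos k))) h1
            rwa [smul_add, smul_smul, inv_mul_cancel₀ (ne_of_gt (hsqpos k)), one_smul] at h2
          have h0 : Filter.Tendsto (fun k : ℕ => (sq k)⁻¹ • v) Filter.atTop
              (nhds (0 : Fin n → ℝ)) := by
            apply squeeze_zero_norm (a := fun k : ℕ => ‖v‖ * (1/((k:ℝ)+1)))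
            · intro k
              rw [norm_smul, Real.norm_eq_abs, abs_of_pos (inv_pos.mpr (hsqpos k))]
              have hle : (sq k)⁻¹ ≤ ((k:ℝ)+1)⁻¹ := by
                apply inv_anti₀ (by positivity) (le_of_lt (hsq2 k))
              calc (sq k)⁻¹ * ‖v‖ ≤ ((k:ℝ)+1)⁻¹ * ‖v‖ :=
                    mul_le_mul_of_nonneg_right hle (norm_nonneg v)
                _ = ‖v‖ * (1/((k:ℝ)+1)) := by ring
            · have h1 : Filter.Tendsto (fun k : ℕ => 1/((k:ℝ)+1)) Filter.atTop (nhds 0) :=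
                tendsto_one_div_add_atTop_nhds_zero_nat
              have h2 := h1.const_mul ‖v‖
              rwa [mul_zero] at h2
          have htend : Filter.Tendsto (fun k : ℕ => (sq k)⁻¹ • v + dstar)
              Filter.atTop (nhds dstar) := by
            have h3 := h0.add_const dstar
            rwa [zero_add] at h3
          exact hd (hT_closed.mem_of_tendsto htend (Filter.Eventually.of_forall hmemk))
        set sstar : ℝ := sSup Sset with hsstar
        have hsmem : sstar ∈ Sset := hSclosed.csSup_mem ⟨0, hS0⟩ hSbdd
        by_cases hnegv : -(v + sstar • dstar) ∈ ⋃ i, alC (D i)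
        · have hsne : sstar ≠ 0 := by
            intro h0
            rw [h0, zero_smul, add_zero] at hnegv
            exact hvn hnegv
          exact ⟨sstar, lt_of_le_of_ne hsmem.1 (Ne.symm hsne), hsmem.2, hnegv⟩
        · exfalso
          obtain ⟨ε, hε, hmem⟩ := tangentStep _ hsmem.2 hnegv
          have h1 : v + (sstar + ε) • dstar ∈ ⋃ i, alC (D i) := by
            rw [add_smul, ← add_assoc]
            exact hmem
          have h2 : sstar + ε ∈ Sset := ⟨by linarith [hsmem.1], h1⟩
          have h3 := le_csSup hSbdd h2
          rw [← hsstar] at h3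
          linarith
      obtain ⟨s1, hs1pos, hw1T, hw1n⟩ := key u1 hu1T hu1n
      -- decomposition T = L + ray(-dstar)
      have decomp : ∀ v ∈ ⋃ i, alC (D i), ∃ a : Fin n → ℝ, ∃ s : ℝ,
          a ∈ linA D hconv ∧ 0 ≤ s ∧ v = a + s • (-dstar) := by
        intro v hvT
        by_cases hvn : -v ∈ ⋃ i, alC (D i)
        · exact ⟨v, 0, mem_linA.mpr ⟨hvT, hvn⟩, le_refl 0, by rw [zero_smul, add_zero]⟩
        · obtain ⟨s, hspos, h1, h2⟩ := key v hvT hvn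
          exact ⟨v + s • dstar, s, mem_linA.mpr ⟨h1, h2⟩, le_of_lt hspos, by module⟩
      have hdn : dstar ∉ linA D hconv := fun h => hd (mem_linA.mp h).1
      -- cover lemma on the lineality
      obtain ⟨f1, -, x1, hx1L, ρ1, hρ1, hball1⟩ :=
        cover_rel_ball Finset.univ (fun i => alC (D i)) (fun i _ => isClosed_alC (D i))
          ((linA D hconv : Set (Fin n → ℝ))) (Submodule.convex _)
          ⟨0, Submodule.zero_mem _⟩ (fun x hx => hcovsub (mem_linA.mp hx).1)
      set C0 := (D f1).filter (fun e => ∀ a, a ∈ linA D hconv → a e.1 = a e.2) with hC0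
      have key1' : ∀ e ∈ D f1, e ∉ C0 → x1 e.1 < x1 e.2 := by
        intro e he heC
        rw [hC0, Finset.mem_filter] at heC
        push_neg at heC
        obtain ⟨a, haL, hane⟩ := heC he
        set ε : ℝ := ρ1/(2*(‖a‖+1)) with hεdef
        have hεpos : 0 < ε := by
          have := norm_nonneg a
          rw [hεdef]; positivity
        have hdist : ∀ b : Fin n → ℝ, ‖b‖ = ‖a‖ → dist (x1 + ε • b) x1 < ρ1 := by
          intro b hba
          rw [dist_eq_norm, add_sub_cancel_left, norm_smul, Real.norm_eq_abs,
            abs_of_pos hεpos, hba, hεdef]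
          rw [div_mul_eq_mul_div, div_lt_iff₀ (by positivity)]
          nlinarith [norm_nonneg a]
        have hmm : ∀ b : Fin n → ℝ, b ∈ linA D hconv → ‖b‖ = ‖a‖ →
            (x1 + ε • b) e.1 ≤ (x1 + ε • b) e.2 := by
          intro b hbL hba
          have h1 : x1 + ε • b ∈ linA D hconv :=
            Submodule.add_mem _ hx1L (Submodule.smul_mem _ ε hbL)
          exact hball1 ⟨h1, hdist b hba⟩ e he
        have hp := hmm a haL rfl
        have hm := hmm (-a) (Submodule.neg_mem _ haL) (by rw [norm_neg])
        simp only [Pi.add_apply, Pi.smul_apply, Pi.neg_apply, smul_eq_mul] at hp hm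
        rcases lt_or_gt_of_ne hane with h | h
        · nlinarith
        · nlinarith
      set inactC := (D f1) \ C0 with hinactC
      set δ1 : ℝ := if h : inactC.Nonempty then inactC.inf' h (fun e => x1 e.2 - x1 e.1) else 1
        with hδ1def
      have hδ1pos : 0 < δ1 := by
        rw [hδ1def]
        split_ifs with h
        · rw [Finset.lt_inf'_iff]
          intro e he
          rw [hinactC, Finset.mem_sdiff] at he
          have := key1' e he.1 he.2
          linarith
        · exact one_pos
      have hTmemZ : ∀ ζ : Fin n → ℝ, (∀ e ∈ C0, ζ e.1 = ζ e.2) → 2*‖ζ‖ < δ1 →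
          x1 + ζ ∈ ⋃ i, alC (D i) := by
        intro ζ hζeq hζsmall
        refine Set.mem_iUnion.mpr ⟨f1, ?_⟩
        intro e he
        simp only [Pi.add_apply]
        by_cases heC : e ∈ C0
        · have hx1e : x1 e.1 = x1 e.2 := by
            rw [hC0, Finset.mem_filter] at heC
            exact heC.2 x1 hx1L
          rw [hx1e, hζeq e heC]
        · have hein : e ∈ inactC := by
            rw [hinactC, Finset.mem_sdiff]; exact ⟨he, heC⟩
          have hslack : δ1 ≤ x1 e.2 - x1 e.1 := by
            rw [hδ1def, dif_pos ⟨e, hein⟩]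
            exact Finset.inf'_le _ hein
          have hb1 : |ζ e.1| ≤ ‖ζ‖ := by simpa using norm_le_pi_norm ζ e.1
          have hb2 : |ζ e.2| ≤ ‖ζ‖ := by simpa using norm_le_pi_norm ζ e.2
          have := le_abs_self (ζ e.1)
          have := neg_abs_le (ζ e.2)
          linarith
      have keyZsmall : ∀ ζ : Fin n → ℝ, (∀ e ∈ C0, ζ e.1 = ζ e.2) → 2*‖ζ‖ < δ1 →
          ζ ∈ linA D hconv := by
        intro ζ hζeq hζsmall
        have hmem1 : x1 + ζ ∈ ⋃ i, alC (D i) := hTmemZ ζ hζeq hζsmall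
        have hmem2 : x1 - ζ ∈ ⋃ i, alC (D i) := by
          have h1 : ∀ e ∈ C0, (-ζ) e.1 = (-ζ) e.2 := by
            intro e he
            simp only [Pi.neg_apply, hζeq e he]
          have h2 : 2*‖-ζ‖ < δ1 := by rwa [norm_neg]
          have := hTmemZ (-ζ) h1 h2
          rwa [show x1 + -ζ = x1 - ζ by module] at this
        obtain ⟨a, s, haL, hs, hva⟩ := decomp (x1 + ζ) hmem1
        obtain ⟨a', s', haL', hs', hva'⟩ := decomp (x1 - ζ) hmem2
        have h3 : (a + s • (-dstar)) + (a' + s' • (-dstar)) = (2:ℝ) • x1 := by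
          rw [← hva, ← hva']; module
        have h4 : (a + a') - (2:ℝ) • x1 = (s+s') • dstar := by
          rw [← h3]; module
        have hmemL : (s+s') • dstar ∈ linA D hconv := by
          rw [← h4]
          exact Submodule.sub_mem _ (Submodule.add_mem _ haL haL')
            (Submodule.smul_mem _ 2 hx1L)
        have hss : s + s' = 0 := by
          by_contra hss
          have hsspos : 0 < s + s' := lt_of_le_of_ne (by linarith) (Ne.symm hss)
          have h5 := Submodule.smul_mem (linA D hconv) (s+s')⁻¹ hmemL
          rw [smul_smul, inv_mul_cancel₀ (ne_of_gt hsspos), one_smul] at h5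
          exact hdn h5
        have hs0 : s = 0 := by linarith
        have hζa : ζ = a - x1 := by
          rw [hs0, zero_smul, add_zero] at hva
          rw [← hva]; module
        rw [hζa]
        exact Submodule.sub_mem _ haL hx1L
      have keyZ : ∀ ζ : Fin n → ℝ, (∀ e ∈ C0, ζ e.1 = ζ e.2) → ζ ∈ linA D hconv := by
        intro ζ hζeq
        set c : ℝ := δ1/(2*(2*‖ζ‖+1)) with hcdef
        have hcpos : 0 < c := by
          have := norm_nonneg ζ
          rw [hcdef]; positivity
        have h1 : c • ζ ∈ linA D hconv := by
          apply keyZsmall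
          · intro e he
            simp only [Pi.smul_apply, smul_eq_mul, hζeq e he]
          · rw [norm_smul, Real.norm_eq_abs, abs_of_pos hcpos]
            have hc2 : c * (2*(2*‖ζ‖+1)) = δ1 := by
              rw [hcdef]; field_simp
            nlinarith [norm_nonneg ζ, hcpos]
        have h2 := Submodule.smul_mem (linA D hconv) c⁻¹ h1
        rwa [smul_smul, inv_mul_cancel₀ (ne_of_gt hcpos), one_smul] at h2
      have hexe : ¬ ∀ e ∈ C0, dstar e.1 = dstar e.2 := fun h => hdn (keyZ dstar h)
      push_neg at hexe
      obtain ⟨e, heC0, hne⟩ := hexe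
      have hC0e : ∀ a, a ∈ linA D hconv → a e.1 = a e.2 := (Finset.mem_filter.mp heC0).2
      rcases lt_or_gt_of_ne hne with hlt | hgt
      · have hvalid : ∀ d ∈ ⋃ i, alC (D i), d e.2 ≤ d e.1 := by
          intro d hdT
          obtain ⟨a, s, haL, hs, rfl⟩ := decomp d hdT
          have hae := hC0e a haL
          simp only [Pi.add_apply, Pi.smul_apply, Pi.neg_apply, smul_eq_mul]
          nlinarith
        have := hval e.2 e.1 hvalid
        linarith
      · have hvalid : ∀ d ∈ ⋃ i, alC (D i), d e.1 ≤ d e.2 := by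
          intro d hdT
          obtain ⟨a, s, haL, hs, rfl⟩ := decomp d hdT
          have hae := hC0e a haL
          simp only [Pi.add_apply, Pi.smul_apply, Pi.neg_apply, smul_eq_mul]
          nlinarith
        have := hval e.1 e.2 hvalid
        linarith

end ConeLemma


section Plevel

variable {n m : ℕ} {V : Matrix (Fin n) (Fin m) Trop}

/-- index type for the pieces of the polytope -/
abbrev PIdx (V : Matrix (Fin n) (Fin m) Trop) := {f : Fin n → Fin m // ∀ i, V i (f i) ≠ ⊤}

def pE (V : Matrix (Fin n) (Fin m) Trop) (f : PIdx V) : Finset (Fin n × Fin n) :=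
  Finset.univ.filter (fun e : Fin n × Fin n => V e.1 (f.1 e.2) ≠ ⊤)

def pB (V : Matrix (Fin n) (Fin m) Trop) (f : PIdx V) : Fin n × Fin n → ℝ :=
  fun e => tval (V e.1 (f.1 e.2)) - tval (V e.2 (f.1 e.2))

lemma pIdx_nonempty (hV : DoublyRAstic V) : Nonempty (PIdx V) := by
  choose g hg using hV.1
  exact ⟨⟨g, hg⟩⟩

lemma tconvM_rep (hV : DoublyRAstic V) :
    tconvM V = ⋃ f : PIdx V, piece (pE V f) (pB V f) := by
  ext z
  rw [mem_iff_covers hV]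
  constructor
  · intro hc
    choose g hg1 hg2 using hc
    refine Set.mem_iUnion.mpr ⟨⟨g, hg1⟩, ?_⟩
    intro e he
    rw [pE, Finset.mem_filter] at he
    have := hg2 e.2 e.1 he.2
    rw [pB]
    dsimp only
    linarith
  · intro hz
    rw [Set.mem_iUnion] at hz
    obtain ⟨f, hf⟩ := hz
    intro i
    refine ⟨f.1 i, f.2 i, ?_⟩
    intro k hk
    have he : ((k, i) : Fin n × Fin n) ∈ pE V f := by
      rw [pE, Finset.mem_filter]
      exact ⟨Finset.mem_univ _, hk⟩
    have := hf (k, i) he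
    rw [pB] at this
    dsimp only at this
    linarith

lemma tconvM_closed (hV : DoublyRAstic V) : IsClosed (tconvM V) := by
  rw [tconvM_rep hV]
  exact isClosed_iUnion_of_finite (fun f => isClosed_piece _ _)

/-- existence of a euclidean-like projection onto a closed nonempty set,
with the variational inequality in the convex case -/
lemma exists_proj {P : Set (Fin n → ℝ)} (hcl : IsClosed P) (hconv : Convex ℝ P)
    (hne : P.Nonempty) (z : Fin n → ℝ) :
    ∃ w ∈ P, ∀ x ∈ P, (∑ i, (z i - w i)*(x i - w i)) ≤ 0 := by
  classical
  set φ : (Fin n → ℝ) → ℝ := fun x => ∑ i, (z i - x i)^2 with hφ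
  have hφc : Continuous φ := by
    apply continuous_finset_sum
    intro i _
    exact ((continuous_const.sub (continuous_apply i)).pow 2)
  have hφnn : ∀ x, 0 ≤ φ x := fun x => Finset.sum_nonneg (fun i _ => sq_nonneg _)
  have hdist : ∀ x : Fin n → ℝ, dist x z ≤ Real.sqrt (φ x) := by
    intro x
    rw [dist_pi_le_iff (Real.sqrt_nonneg _)]
    intro i
    have h1 : (z i - x i)^2 ≤ φ x := by
      show (z i - x i)^2 ≤ ∑ j, (z j - x j)^2
      exact Finset.single_le_sum (f := fun j => (z j - x j)^2)
        (fun j _ => sq_nonneg _) (Finset.mem_univ i)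
    have h2 : dist (x i) (z i) = |z i - x i| := by
      rw [Real.dist_eq, abs_sub_comm]
    rw [h2]
    have := Real.sqrt_le_sqrt h1
    rwa [Real.sqrt_sq_eq_abs] at this
  obtain ⟨xb, hxb⟩ := hne
  set R : ℝ := Real.sqrt (φ xb) with hR
  set K := P ∩ Metric.closedBall z R with hK
  have hKcpt : IsCompact K := (isCompact_closedBall z R).inter_left hcl
  have hKne : K.Nonempty := by
    refine ⟨xb, hxb, ?_⟩
    rw [Metric.mem_closedBall]
    exact hdist xb
  obtain ⟨w, hwK, hwmin⟩ := hKcpt.exists_isMinOn hKne hφc.continuousOn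
  have hwP : w ∈ P := hwK.1
  have hmin : ∀ x ∈ P, φ w ≤ φ x := by
    intro x hx
    by_cases hxK : x ∈ Metric.closedBall z R
    · exact hwmin ⟨hx, hxK⟩
    · rw [Metric.mem_closedBall] at hxK
      push_neg at hxK
      have h1 : R < Real.sqrt (φ x) := lt_of_lt_of_le hxK (hdist x)
      have h2 : φ xb < φ x := by
        by_contra hle
        push_neg at hle
        have h3 := Real.sqrt_le_sqrt hle
        rw [← hR] at h3
        linarith
      have h4 : φ w ≤ φ xb := hwmin ⟨hxb, by rw [Metric.mem_closedBall]; exact hdist xb⟩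
      linarith
  refine ⟨w, hwP, ?_⟩
  intro x hx
  set S : ℝ := ∑ i, (z i - w i)*(x i - w i) with hS
  set Q : ℝ := ∑ i, (x i - w i)^2 with hQ
  have hQnn : 0 ≤ Q := Finset.sum_nonneg (fun i _ => sq_nonneg _)
  have hkey : ∀ t : ℝ, 0 < t → t ≤ 1 → 2*t*S ≤ t^2*Q := by
    intro t ht0 ht1
    have hmem : w + t • (x - w) ∈ P := by
      have h1 := hconv hwP hx (by linarith : (0:ℝ) ≤ 1 - t) (le_of_lt ht0) (by ring)
      rwa [show (1-t) • w + t • x = w + t • (x - w) by module] at h1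
    have h2 := hmin _ hmem
    have h3 : φ (w + t • (x - w)) = φ w - 2*t*S + t^2*Q := by
      rw [hφ, hS, hQ]
      dsimp only
      rw [Finset.mul_sum, Finset.mul_sum, ← Finset.sum_sub_distrib, ← Finset.sum_add_distrib]
      apply Finset.sum_congr rfl
      intro i _
      simp only [Pi.add_apply, Pi.smul_apply, Pi.sub_apply, smul_eq_mul]
      ring
    rw [h3] at h2
    linarith
  by_contra hSpos
  push_neg at hSpos
  by_cases hQ0 : Q = 0
  · have := hkey 1 one_pos (le_refl 1)
    rw [hQ0] at this
    nlinarith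
  · have hQpos : 0 < Q := lt_of_le_of_ne hQnn (Ne.symm hQ0)
    set t := min 1 (S/Q) with ht
    have ht0 : 0 < t := lt_min one_pos (div_pos hSpos hQpos)
    have ht1 : t ≤ 1 := min_le_left _ _
    have h4 := hkey t ht0 ht1
    have h5 : t*Q ≤ S := by
      have : t ≤ S/Q := min_le_right _ _
      calc t*Q ≤ (S/Q)*Q := mul_le_mul_of_nonneg_right this hQnn
        _ = S := by field_simp
    nlinarith

lemma tconvM_subset_wdp (hV : DoublyRAstic V) : tconvM V ⊆ wdp (CC V) :=
  fun x hx i j hij => mem_le_CC hV hx i j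

theorem wdp_subset_tconvM (hV : DoublyRAstic V) (hconv : Convex ℝ (tconvM V)) :
    wdp (CC V) ⊆ tconvM V := by
  intro z hz
  by_contra hzP
  haveI : Nonempty (PIdx V) := pIdx_nonempty hV
  obtain ⟨w, hwP, hproj⟩ := exists_proj (tconvM_closed hV) hconv (tconvM_nonempty hV) z
  have hwp' : w ∈ ⋃ f : PIdx V, piece (pE V f) (pB V f) := by
    rw [← tconvM_rep hV]; exact hwP
  haveI hne' : Nonempty {f : PIdx V // w ∈ piece (pE V f) (pB V f)} := by
    rw [Set.mem_iUnion] at hwp'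
    obtain ⟨f, hf⟩ := hwp'
    exact ⟨⟨f, hf⟩⟩
  set D' : {f : PIdx V // w ∈ piece (pE V f) (pB V f)} → Finset (Fin n × Fin n) :=
    fun f => (pE V f.1).filter (fun e => w e.1 - w e.2 = pB V f.1 e) with hD'
  have hrep : tangentSet (tconvM V) w = ⋃ f, alC (D' f) :=
    tangent_rep (pE V) (pB V) (tconvM_rep hV) hconv hwP
  have hconvT : Convex ℝ (⋃ f, alC (D' f)) := by
    rw [← hrep]; exact tangent_convex hconv hwP
  set dstar : Fin n → ℝ := fun i => z i - w i with hdstar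
  have hval : ∀ k l : Fin n, (∀ d ∈ ⋃ f, alC (D' f), d k ≤ d l) → dstar k ≤ dstar l := by
    intro k l hv
    have hbound : ∀ x ∈ tconvM V, x k - x l ≤ w k - w l := by
      intro x hx
      have h1 : x - w ∈ tangentSet (tconvM V) w := mem_tangent_of_mem hx
      rw [hrep] at h1
      have h2 := hv _ h1
      simp only [Pi.sub_apply] at h2
      linarith
    by_cases hkl : k = l
    · subst hkl; exact le_refl _
    · have h2 := CC_le_of_bound hV k l (w k - w l) hbound
      have h3 := le_trans (hz k l hkl) h2
      rw [WithTop.coe_le_coe] at h3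
      simp only [hdstar]
      linarith
  have hrk : n ≤ n + Module.finrank ℝ (linA D' hconvT) := Nat.le_add_right _ _
  have hmem := coneLemma n _ D' hconvT hrk dstar hval
  rw [← hrep] at hmem
  obtain ⟨ε, hε, hmem2⟩ := hmem
  have h5 := hproj _ hmem2
  have h6 : ∑ i, (z i - w i) * ((w + ε • dstar) i - w i) = ε * ∑ i, (z i - w i)^2 := by
    rw [Finset.mul_sum]
    apply Finset.sum_congr rfl
    intro i _
    simp only [Pi.add_apply, Pi.smul_apply, smul_eq_mul, hdstar]
    ring
  rw [h6] at h5
  have h7 : ∑ i, (z i - w i)^2 ≤ 0 := by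
    by_contra h
    push_neg at h
    nlinarith
  have h9 : ∑ j, (z j - w j)^2 = 0 :=
    le_antisymm h7 (Finset.sum_nonneg (fun j _ => sq_nonneg _))
  have h10 : z = w := by
    funext i
    have h8 := (Finset.sum_eq_zero_iff_of_nonneg (fun j _ => sq_nonneg (z j - w j))).mp h9
      i (Finset.mem_univ i)
    have := sq_eq_zero_iff.mp h8
    linarith
  rw [h10] at hzP
  exact hzP hwP

end Plevel

end S2


/-- A tropical polytope `P ⊆ ℝ^n/ℝ𝟙` is a polytrope (classically convex)
iff `P = tconv(C*) = Q(C)` for some `C ∈ T^{n×n}` without negative cycles. -/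
theorem stmt2 {n m : ℕ} (V : Matrix (Fin n) (Fin m) Trop) (hV : DoublyRAstic V) :
    Convex ℝ (tconvM V) ↔
      ∃ C : Matrix (Fin n) (Fin n) Trop, NoNegCycle C ∧
        tconvM V = tconvM (kleene C) ∧ tconvM (kleene C) = wdp C := by
  constructor
  · intro hconv
    refine ⟨S2.CC V, S2.noNegCycle_CC hV, ?_, ?_⟩
    · rw [S2.kleene_CC hV, S2.tconvM_CC_eq_wdp hV]
      exact Set.Subset.antisymm (S2.tconvM_subset_wdp hV) (S2.wdp_subset_tconvM hV hconv)
    · rw [S2.kleene_CC hV]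
      exact S2.tconvM_CC_eq_wdp hV
  · rintro ⟨C, -, h1, h2⟩
    rw [h1, h2]
    intro x hx y hy a b ha hb hab
    intro i j hij
    have hxij := hx i j hij
    have hyij := hy i j hij
    by_cases hC : C i j = ⊤
    · rw [hC]; exact le_top
    · rw [← S2.coe_tval hC, WithTop.coe_le_coe] at hxij hyij ⊢
      simp only [Pi.add_apply, Pi.smul_apply, smul_eq_mul]
      have k1 := mul_le_mul_of_nonneg_left hxij ha
      have k2 := mul_le_mul_of_nonneg_left hyij hb
      have k3 : a * S2.tval (C i j) + b * S2.tval (C i j) = S2.tval (C i j) := by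
        rw [← add_mul, hab, one_mul]
      nlinarith [k1, k2, k3]
end
end

section
/- Let G = ([n], E) be a DAG with weights w ∈ ℝ^E. The weighted transitive reduction G^♭_w exists and is unique, and it equals the union over all nodes s ∈ [n] of the intersection of all shortest-path trees at s for w; that is, an edge of G belongs to G^♭_w if and only if there is a node s such that the edge belongs to every shortest-path tree at s. -/
open scoped Classical
noncomputable section

/-- `T` is a shortest-path tree at source `s` in `(E, w)`: a subgraph of `E` spanning the
set of vertices reachable from `s`, with a unique `T`-path from `s` to each reachable
vertex, such that no edge `j → i` of `E` satisfies `w(j→i) + p_j < p_i`, where `p_v` is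
the weight of the `T`-path from `s` to `v`. -/
def IsSPTree {n : ℕ} (E : Fin n → Fin n → Prop) (w : Fin n → Fin n → ℝ) (s : Fin n)
    (T : Fin n → Fin n → Prop) : Prop :=
  (∀ a b, T a b → E a b) ∧
  (∀ a b, T a b → Reaches E s a) ∧
  (∀ v, Reaches E s v → ∃! p, IsPathFrom T s v p) ∧
  (∀ j i, E j i → Reaches E s j →
    ∀ pj pi, IsPathFrom T s j pj → IsPathFrom T s i pi →
      ¬ (w j i + pathWeight w pj < pathWeight w pi))

variable {n : ℕ} {E T R : Fin n → Fin n → Prop} {w : Fin n → Fin n → ℝ}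


variable {n : ℕ} {E T R : Fin n → Fin n → Prop} {w : Fin n → Fin n → ℝ}

lemma pw_nil : pathWeight w ([] : List (Fin n)) = 0 := rfl
lemma pw_single (a : Fin n) : pathWeight w [a] = 0 := rfl
lemma pw_cons_cons (a b : Fin n) (l : List (Fin n)) :
    pathWeight w (a :: b :: l) = w a b + pathWeight w (b :: l) := rfl

lemma path_ne_nil {a b : Fin n} {p : List (Fin n)} (h : IsPathFrom R a b p) : p ≠ [] := by
  rintro rfl; simp [IsPathFrom] at h

lemma path_single (a : Fin n) : IsPathFrom R a a [a] := by
  refine ⟨rfl, rfl, ?_⟩; exact List.isChain_singleton a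

lemma path_pair {a b : Fin n} (h : R a b) : IsPathFrom R a b [a, b] := by
  refine ⟨rfl, rfl, ?_⟩; exact List.isChain_pair.mpr h

lemma path_imp {a b : Fin n} {p : List (Fin n)} (hTE : ∀ x y, T x y → E x y)
    (h : IsPathFrom T a b p) : IsPathFrom E a b p :=
  ⟨h.1, h.2.1, h.2.2.imp hTE⟩

lemma path_len_one {a b : Fin n} {p : List (Fin n)} (h : IsPathFrom R a b p)
    (hl : p.length ≤ 1) : a = b ∧ p = [a] := by
  obtain ⟨h1, h2, _⟩ := h
  match p with
  | [] => simp at h1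
  | [x] =>
    simp at h1 h2; exact ⟨h1.symm.trans h2, by rw [h1]⟩
  | x :: y :: l => simp at hl

lemma pw_append {p q : List (Fin n)} {a : Fin n} (hp : p.getLast? = some a)
    (hq : q.head? = some a) : pathWeight w (p ++ q.tail) = pathWeight w p + pathWeight w q := by
  induction p with
  | nil => simp at hp
  | cons x p ih =>
    match p with
    | [] =>
      simp at hp; subst hp
      have hq' : x :: q.tail = q := List.cons_head?_tail hq
      rw [← hq']
      match q.tail with
      | [] => simp [pw_single, pw_nil]
      | y :: l => simp [pw_single, pw_cons_cons]
    | y :: p' =>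
      have hp' : (y :: p').getLast? = some a := by
        rw [List.getLast?_cons_cons] at hp; exact hp
      have := ih hp'
      simp only [List.cons_append, pw_cons_cons] at *
      rw [this]; ring

lemma path_append {a b c : Fin n} {p q : List (Fin n)} (hp : IsPathFrom R a b p)
    (hq : IsPathFrom R b c q) : IsPathFrom R a c (p ++ q.tail) := by
  obtain ⟨hp1, hp2, hp3⟩ := hp
  obtain ⟨hq1, hq2, hq3⟩ := hq
  have hpne : p ≠ [] := by rintro rfl; simp at hp1
  refine ⟨?_, ?_, ?_⟩
  · rw [List.head?_append]
    cases p with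
    | nil => simp at hp1
    | cons x l => simpa using hp1
  · have hq' : b :: q.tail = q := List.cons_head?_tail hq1
    cases htl : q.tail with
    | nil =>
      have : q = [b] := by rw [← hq', htl]
      rw [this] at hq2; simp at hq2
      simpa [hq2] using hp2
    | cons y l =>
      rw [List.getLast?_append_of_ne_nil _ (by simp)]
      rw [← hq', htl] at hq2
      rwa [List.getLast?_cons_cons] at hq2
  · change List.IsChain R _ at hq3 ⊢; rw [List.isChain_append]
    refine ⟨hp3, hq3.tail, ?_⟩
    intro x hx y hy
    rw [hp2] at hx; simp at hx; subst hx
    have hq' : b :: q.tail = q := List.cons_head?_tail hq1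
    rw [← hq'] at hq3
    cases htl : q.tail with
    | nil => rw [htl] at hy; simp at hy
    | cons z l =>
      rw [htl] at hy hq3; simp at hy; subst hy
      exact (List.isChain_cons_cons.mp hq3).1

lemma path_concat {a b c : Fin n} {p : List (Fin n)} (hp : IsPathFrom R a b p)
    (h : R b c) : IsPathFrom R a c (p ++ [c]) := path_append hp (path_pair h)

lemma pw_concat {p : List (Fin n)} {b : Fin n} (hp : p.getLast? = some b) (c : Fin n) :
    pathWeight w (p ++ [c]) = pathWeight w p + w b c := by
  have := pw_append (w := w) hp (q := [b, c]) rfl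
  simpa [pw_cons_cons, pw_single] using this

lemma path_dropLast {a c : Fin n} {p : List (Fin n)} (hp : IsPathFrom R a c p)
    (hl : 2 ≤ p.length) :
    ∃ u, p = p.dropLast ++ [c] ∧ IsPathFrom R a u p.dropLast ∧
      p.dropLast.getLast? = some u ∧ R u c := by
  obtain ⟨h1, h2, h3⟩ := hp
  have hpne : p ≠ [] := by rintro rfl; simp at h1
  have hlast : p.getLast hpne = c := by
    rw [List.getLast?_eq_getLast hpne] at h2; exact Option.some.inj h2
  have hdec : p.dropLast ++ [c] = p := by rw [← hlast]; exact List.dropLast_concat_getLast hpne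
  have hdne : p.dropLast ≠ [] := by
    intro h; rw [h] at hdec; rw [← hdec] at hl; simp at hl
  refine ⟨p.dropLast.getLast hdne, hdec.symm, ⟨?_, ?_, ?_⟩, ?_, ?_⟩
  · rw [← hdec, List.head?_append] at h1
    cases hd : p.dropLast with
    | nil => exact absurd hd hdne
    | cons x l => rw [hd] at h1; simpa using h1
  · exact (List.getLast?_eq_getLast hdne)
  · change List.IsChain R _ at h3; rw [← hdec, List.isChain_append] at h3; exact h3.1
  · exact (List.getLast?_eq_getLast hdne)
  · change List.IsChain R _ at h3; rw [← hdec, List.isChain_append] at h3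
    exact h3.2.2 _ (by rw [List.getLast?_eq_getLast hdne]; simp) c rfl

lemma reaches_self (s : Fin n) : Reaches E s s := ⟨[s], path_single s⟩

lemma reaches_step {s a b : Fin n} (h : Reaches E s a) (e : E a b) : Reaches E s b := by
  obtain ⟨p, hp⟩ := h; exact ⟨p ++ [b], path_concat hp e⟩

lemma transGen_path {a b : Fin n} (h : Relation.TransGen E a b) :
    ∃ p, IsPathFrom E a b p ∧ 2 ≤ p.length := by
  induction h with
  | single e => exact ⟨[a, _], path_pair e, by simp⟩
  | tail _ e ih =>
    obtain ⟨p, hp, hl⟩ := ih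
    exact ⟨p ++ [_], path_concat hp e, by simp; omega⟩

lemma dag_irrefl (hdag : IsDAG E) (a : Fin n) : ¬ Relation.TransGen E a a := by
  intro h
  obtain ⟨p, hp, hl⟩ := transGen_path h
  have := hdag a p hp
  omega

lemma path_nodup (hdag : IsDAG E) {a b : Fin n} {p : List (Fin n)}
    (h : IsPathFrom E a b p) : p.Nodup := by
  have h1 : p.Chain' (Relation.TransGen E) :=
    h.2.2.imp fun _ _ e => Relation.TransGen.single e
  have h2 : p.Pairwise (Relation.TransGen E) := List.isChain_iff_pairwise.mp h1
  exact h2.imp fun h => by rintro rfl; exact dag_irrefl hdag _ h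

lemma paths_finite (hdag : IsDAG E) (s v : Fin n) :
    {p : List (Fin n) | IsPathFrom E s v p}.Finite := by
  apply (List.finite_length_le (Fin n) n).subset
  intro p hp
  have := (path_nodup hdag hp).length_le_card
  simpa using this

lemma dag_wf (hdag : IsDAG E) : WellFounded (Relation.TransGen E) := by
  haveI : IsIrrefl (Fin n) (Relation.TransGen E) := ⟨dag_irrefl hdag⟩
  exact Finite.wellFounded_of_trans_of_irrefl _

lemma path_two_le {a b : Fin n} {p : List (Fin n)} (h : IsPathFrom R a b p) (hab : a ≠ b) :
    2 ≤ p.length := by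
  by_contra hl
  push_neg at hl
  exact hab (path_len_one h (by omega)).1

lemma getLast?_tail_two {d : List (Fin n)} (h : 2 ≤ d.length) : d.tail.getLast? = d.getLast? := by
  match d with
  | x :: y :: l => rw [List.getLast?_cons_cons]; rfl
  | [] | [x] => simp at h

lemma exists_sptree_avoiding (hdag : IsDAG E) (w : Fin n → Fin n → ℝ) (s j i : Fin n)
    (hji : E j i) (q0 : List (Fin n)) (hq0 : IsPathFrom E j i q0) (hne : q0 ≠ [j, i])
    (hw : pathWeight w q0 ≤ w j i) :
    ∃ T : Fin n → Fin n → Prop, IsSPTree E w s T ∧ ¬ T j i := by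
  -- j ≠ i
  have hij : j ≠ i := by
    rintro rfl
    have := hdag j [j, j] (path_pair hji)
    simp at this
  -- q0 has length ≥ 3
  have hq0len : 3 ≤ q0.length := by
    have h2 : 2 ≤ q0.length := path_two_le hq0 hij
    by_contra hl
    push_neg at hl
    have hq0l2 : q0.length = 2 := by omega
    match q0, hq0l2 with
    | [x, y], _ =>
      obtain ⟨h1, h2, _⟩ := hq0
      simp at h1 h2
      exact hne (by rw [h1, h2])
  -- decompose q0 = d ++ [i], with d a path from j to u0, u0 ≠ j
  obtain ⟨u0, hq0dec, hd, hdlast, hu0i⟩ := path_dropLast hq0 (by omega)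
  have hdlen : 2 ≤ q0.dropLast.length := by
    have : q0.dropLast.length = q0.length - 1 := List.length_dropLast
    omega
  have hu0j : u0 ≠ j := by
    intro h
    rw [h] at hd
    have := hdag j q0.dropLast hd
    omega
  -- the good-path property
  set Good : Fin n → List (Fin n) → Prop := fun v p =>
    IsPathFrom E s v p ∧ (∀ q, IsPathFrom E s v q → pathWeight w p ≤ pathWeight w q) ∧
      (v = i → p.dropLast.getLast? ≠ some j) with hGood
  have hBex : ∀ v, Reaches E s v → ∃ p, Good v p := by
    intro v hv
    obtain ⟨p0, hp0, hp0min⟩ := Set.exists_min_image _ (pathWeight w) (paths_finite hdag s v) hv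
    by_cases hlast : v = i ∧ p0.dropLast.getLast? = some j
    · obtain ⟨rfl, hlast⟩ := hlast
      -- p0 ends with edge j → i; replace by detour through q0
      have hp0len : 2 ≤ p0.length := by
        have hne' : p0.dropLast ≠ [] := by intro h; rw [h] at hlast; simp at hlast
        have h1 := List.length_pos_iff.mpr hne'
        have h2 := List.length_dropLast (xs := p0)
        omega
      obtain ⟨u1, hp0dec, hd0, hd0last, hu1i⟩ := path_dropLast hp0 hp0len
      have hu1 : u1 = j := by
        rw [hlast] at hd0last; exact (Option.some.inj hd0last).symm
      subst hu1
      -- r := p0.dropLast ++ q0.tail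
      refine ⟨p0.dropLast ++ q0.tail, ⟨path_append hd0 hq0, ?_, ?_⟩⟩

      · intro q hq
        have hWr : pathWeight w (p0.dropLast ++ q0.tail) =
            pathWeight w p0.dropLast + pathWeight w q0 := pw_append hd0last hq0.1
        have hWp0 : pathWeight w p0 = pathWeight w p0.dropLast + w u1 v := by
          conv_lhs => rw [hp0dec]
          exact pw_concat hd0last v
        have := hp0min q hq
        rw [hWr]
        rw [hWp0] at this
        linarith
      · intro _ habs
        -- last edge of the detour is u0 → i with u0 ≠ j
        have htail : q0.tail = q0.dropLast.tail ++ [v] := by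
          conv_lhs => rw [hq0dec]
          match h : q0.dropLast with
          | [] => rw [h] at hdlen; simp at hdlen
          | x :: l => rfl
        rw [htail, ← List.append_assoc, List.dropLast_concat] at habs
        rw [List.getLast?_append_of_ne_nil _ (by
          intro h
          have := congrArg List.length h
          simp at this
          omega)] at habs
        rw [getLast?_tail_two hdlen, hdlast] at habs
        exact hu0j (Option.some.inj habs)
    · rw [not_and] at hlast
      refine ⟨p0, hp0, hp0min, ?_⟩
      intro hv hj
      exact hlast hv hj
  set sp : Fin n → List (Fin n) := fun v => if h : Reaches E s v then (hBex v h).choose else []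
    with hspdef
  have hsp : ∀ v, Reaches E s v → Good v (sp v) := by
    intro v h
    simp only [hspdef, dif_pos h]
    exact (hBex v h).choose_spec
  set T : Fin n → Fin n → Prop :=
    fun u v => v ≠ s ∧ Reaches E s v ∧ (sp v).dropLast.getLast? = some u with hTdef
  -- basic facts about T
  have hTfact : ∀ u v, T u v → E u v ∧ Reaches E s u ∧
      IsPathFrom E s u (sp v).dropLast ∧ sp v = (sp v).dropLast ++ [v] := by
    intro u v ⟨hvs, hv, hu⟩
    have hpath : IsPathFrom E s v (sp v) := (hsp v hv).1
    have hlen : 2 ≤ (sp v).length := by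
      have hne : (sp v).dropLast ≠ [] := by
        intro h; rw [h] at hu; simp at hu
      have h1 : 1 ≤ (sp v).dropLast.length := List.length_pos_iff.mpr hne
      have : (sp v).dropLast.length = (sp v).length - 1 := List.length_dropLast
      have h0 : (sp v) ≠ [] := path_ne_nil hpath
      have := List.length_pos_iff.mpr h0
      omega
    obtain ⟨u', hdec, hd, hdlast, hu'⟩ := path_dropLast hpath hlen
    have : u' = u := by rw [hdlast] at hu; exact Option.some.inj hu
    subst this
    exact ⟨hu', ⟨_, hd⟩, hd, hdec⟩
  have hTE : ∀ u v, T u v → E u v := fun u v h => (hTfact u v h).1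
  have hTuniq : ∀ u u' v, T u v → T u' v → u = u' := by
    intro u u' v hu hu'
    have := hu.2.2.symm.trans hu'.2.2
    exact Option.some.inj this
  -- sp s = [s]
  have hsps : sp s = [s] := by
    have hpath : IsPathFrom E s s (sp s) := (hsp s (reaches_self s)).1
    exact (path_len_one hpath (hdag s _ hpath)).2
  -- existence of T-paths with correct weight
  have F4 : ∀ v, Reaches E s v →
      ∃ p, IsPathFrom T s v p ∧ pathWeight w p = pathWeight w (sp v) := by
    intro v
    refine (dag_wf hdag).induction
      (C := fun v => Reaches E s v → ∃ p, IsPathFrom T s v p ∧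
        pathWeight w p = pathWeight w (sp v)) v ?_
    intro x ih hx
    by_cases hxs : x = s
    · subst hxs
      exact ⟨[x], path_single x, by rw [hsps]⟩
    · have hpath : IsPathFrom E s x (sp x) := (hsp x hx).1
      have hlen : 2 ≤ (sp x).length := path_two_le hpath (fun h => hxs h.symm)
      obtain ⟨u, hdec, hd, hdlast, hux⟩ := path_dropLast hpath hlen
      have hTux : T u x := ⟨hxs, hx, hdlast⟩
      have hru : Reaches E s u := ⟨_, hd⟩
      obtain ⟨pu, hpu, hpuW⟩ := ih u (Relation.TransGen.single hux) hru
      refine ⟨pu ++ [x], path_concat hpu hTux, ?_⟩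
      have h1 : pathWeight w (pu ++ [x]) = pathWeight w pu + w u x := pw_concat hpu.2.1 x
      have h2 : pathWeight w (sp x) = pathWeight w (sp x).dropLast + w u x := by
        conv_lhs => rw [hdec]
        exact pw_concat hdlast x
      -- pathWeight (sp u) = pathWeight (sp x).dropLast
      have hle1 : pathWeight w (sp u) ≤ pathWeight w (sp x).dropLast := (hsp u hru).2.1 _ hd
      have hle2 : pathWeight w (sp x).dropLast ≤ pathWeight w (sp u) := by
        have hq : IsPathFrom E s x ((sp u) ++ [x]) := path_concat (hsp u hru).1 hux
        have := (hsp x hx).2.1 _ hq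
        have hW : pathWeight w ((sp u) ++ [x]) = pathWeight w (sp u) + w u x :=
          pw_concat (hsp u hru).1.2.1 x
        rw [hW, h2] at this
        linarith
      rw [h1, h2, hpuW]
      linarith
  -- uniqueness of T-paths
  have F5 : ∀ m (p : List (Fin n)) v q, p.length ≤ m →
      IsPathFrom T s v p → IsPathFrom T s v q → p = q := by
    intro m
    induction m with
    | zero =>
      intro p v q hl hp _
      have := path_ne_nil hp
      cases p with
      | nil => exact absurd rfl this
      | cons a l => simp at hl
    | succ m ih =>
      intro p v q hl hp hq
      by_cases hvs : v = s
      · subst hvs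
        have hpE := path_imp hTE hp
        have hqE := path_imp hTE hq
        rw [(path_len_one hpE (hdag _ _ hpE)).2, (path_len_one hqE (hdag _ _ hqE)).2]
      · have hvs' : s ≠ v := fun h => hvs h.symm
        have hpl : 2 ≤ p.length := path_two_le hp hvs'
        have hql : 2 ≤ q.length := path_two_le hq hvs'
        obtain ⟨u1, hpdec, hdp, hdplast, hu1⟩ := path_dropLast hp hpl
        obtain ⟨u2, hqdec, hdq, hdqlast, hu2⟩ := path_dropLast hq hql
        have : u1 = u2 := hTuniq u1 u2 v hu1 hu2
        subst this
        have hdlen : p.dropLast.length ≤ m := by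
          have := List.length_dropLast (xs := p)
          omega
        have := ih p.dropLast u1 q.dropLast hdlen hdp hdq
        rw [hpdec, hqdec, this]
  -- weight of any T-path
  have F6 : ∀ v p, Reaches E s v → IsPathFrom T s v p →
      pathWeight w p = pathWeight w (sp v) := by
    intro v p hv hp
    obtain ⟨p', hp', hW⟩ := F4 v hv
    rw [F5 p.length p v p' le_rfl hp hp', hW]
  refine ⟨T, ⟨hTE, fun a b h => (hTfact a b h).2.1, ?_, ?_⟩, ?_⟩
  · intro v hv
    obtain ⟨p, hp, _⟩ := F4 v hv
    exact ⟨p, hp, fun q hq => F5 q.length q v p le_rfl hq hp⟩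
  · intro a b hab hra pa pb hpa hpb
    have hrb : Reaches E s b := reaches_step hra hab
    rw [F6 a pa hra hpa, F6 b pb hrb hpb]
    have hle : pathWeight w (sp b) ≤ pathWeight w (sp a) + w a b := by
      have hq : IsPathFrom E s b ((sp a) ++ [b]) := path_concat (hsp a hra).1 hab
      have := (hsp b hrb).2.1 _ hq
      have hW : pathWeight w ((sp a) ++ [b]) = pathWeight w (sp a) + w a b :=
        pw_concat (hsp a hra).1.2.1 b
      linarith [hW ▸ this]
    intro h
    linarith
  · intro ⟨_, hri, hlast⟩
    exact (hsp i hri).2.2 rfl hlast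


/-- The weighted transitive reduction `G^♭_w` equals the union over `s`
of the intersection of all shortest-path trees at `s`: an edge of `G` belongs to `G^♭_w`
iff there is a node `s` such that the edge belongs to every shortest-path tree at `s`. -/
theorem stmt3 {n : ℕ} (E : Fin n → Fin n → Prop) (hdag : IsDAG E)
    (w : Fin n → Fin n → ℝ) (j i : Fin n) :
    InWTR E w j i ↔
      E j i ∧ ∃ s : Fin n, ∀ T : Fin n → Fin n → Prop, IsSPTree E w s T → T j i := by
  constructor
  · rintro ⟨hji, hmin⟩
    refine ⟨hji, j, ?_⟩
    intro T hT
    obtain ⟨hTE, hTs, huniq, hnoshort⟩ := hT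
    obtain ⟨pi, hpi, _⟩ := huniq i ⟨[j, i], path_pair hji⟩
    obtain ⟨pj0, hpj0, _⟩ := huniq j (reaches_self j)
    have hpj0E := path_imp hTE hpj0
    have hpj0eq : pj0 = [j] := (path_len_one hpj0E (hdag _ _ hpj0E)).2
    have hns := hnoshort j i hji (reaches_self j) pj0 pi hpj0 hpi
    rw [hpj0eq, pw_single] at hns
    by_cases hpieq : pi = [j, i]
    · rw [hpieq] at hpi
      have := hpi.2.2
      exact List.isChain_pair.mp this
    · have := hmin pi (path_imp hTE hpi) hpieq
      exact absurd (by linarith) hns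
  · rintro ⟨hji, s, hT⟩
    refine ⟨hji, ?_⟩
    intro p hp hpne
    by_contra hlt
    push_neg at hlt
    obtain ⟨T, hTtree, hTnot⟩ := exists_sptree_avoiding hdag w s j i hji p hp hpne hlt
    exact hTnot (hT T hTtree)
end
end
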